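/- arXiv:0904.0926 — 4 statements merged into one kernel-verified Lean document; each statement's English description precedes it below -/
import Mathlib

section
/- The rook monoid R_n is generated as a monoid by the transpositions s_1,…,s_{n−1} together with the single idempotent e_{n−1} (the partial identity on {1,…,n−1}). -/
open scoped Classical

abbrev Rook (n : ℕ) : Type := Fin n ≃. Fin n

instance rookMonoid (n : ℕ) : Monoid (Rook n) where
  mul f g := f.trans g
  one := PEquiv.refl (Fin n)
  mul_assoc := PEquiv.trans_assoc
  one_mul := PEquiv.refl_trans
  mul_one := PEquiv.trans_refl

noncomputable def egen (n j : ℕ) : Rook n :=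
  PEquiv.ofSet {x : Fin n | (x : ℕ) < j}

noncomputable def sgen (n i : ℕ) (h1 : 1 ≤ i) (h2 : i ≤ n - 1) : Rook n :=
  (Equiv.swap (⟨i - 1, by omega⟩ : Fin n) ⟨i, by omega⟩).toPEquiv

section Aux

variable {n : ℕ}

lemma rook_mul_def (f g : Rook n) : f * g = f.trans g := rfl

lemma rook_one_def : (1 : Rook n) = PEquiv.refl (Fin n) := rfl

lemma ofSet_congr {s t : Set (Fin n)} [DecidablePred (· ∈ s)] [DecidablePred (· ∈ t)]
    (h : s = t) : (PEquiv.ofSet s : Rook n) = PEquiv.ofSet t := by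
  ext a b
  simp [PEquiv.mem_ofSet_iff, h]

lemma conj_ofSet (σ : Equiv.Perm (Fin n)) (A : Set (Fin n)) [DecidablePred (· ∈ A)]
    [DecidablePred (· ∈ σ ⁻¹' A)] :
    σ.toPEquiv * PEquiv.ofSet A * σ⁻¹.toPEquiv = PEquiv.ofSet (σ ⁻¹' A) := by
  ext a b
  simp only [rook_mul_def, Option.mem_def, PEquiv.trans_eq_some, PEquiv.ofSet_eq_some_iff,
    Equiv.toPEquiv_apply, Option.some.injEq, Set.mem_preimage]
  constructor
  · rintro ⟨c, ⟨d, rfl, rfl, hd⟩, rfl⟩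
    simp [hd]
  · rintro ⟨rfl, hA⟩
    exact ⟨σ b, ⟨σ b, rfl, rfl, hA⟩, by simp⟩

lemma ofSet_mul_ofSet (s t : Set (Fin n)) [DecidablePred (· ∈ s)] [DecidablePred (· ∈ t)]
    [DecidablePred (· ∈ s ∩ t)] :
    (PEquiv.ofSet s : Rook n) * PEquiv.ofSet t = PEquiv.ofSet (s ∩ t) := by
  ext a b
  simp only [rook_mul_def, Option.mem_def, PEquiv.trans_eq_some, PEquiv.ofSet_eq_some_iff,
    Set.mem_inter_iff]
  constructor
  · rintro ⟨c, ⟨rfl, hc⟩, rfl, hb⟩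
    exact ⟨rfl, hc, hb⟩
  · rintro ⟨rfl, hs, ht⟩
    exact ⟨b, ⟨rfl, hs⟩, rfl, ht⟩

abbrev rookGens (n : ℕ) : Set (Rook n) :=
  {x : Rook n | ∃ (i : ℕ) (h1 : 1 ≤ i) (h2 : i ≤ n - 1), x = sgen n i h1 h2}
    ∪ {egen n (n - 1)}

lemma perm_mem (σ : Equiv.Perm (Fin n)) :
    σ.toPEquiv ∈ Submonoid.closure (rookGens n) := by
  let P : Submonoid (Equiv.Perm (Fin n)) :=
    { carrier := {σ | σ.toPEquiv ∈ Submonoid.closure (rookGens n)}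
      one_mem' := by
        show (Equiv.refl (Fin n)).toPEquiv ∈ Submonoid.closure (rookGens n)
        rw [Equiv.toPEquiv_refl, ← rook_one_def]
        exact one_mem _
      mul_mem' := by
        intro a b ha hb
        show (b.trans a).toPEquiv ∈ Submonoid.closure (rookGens n)
        rw [Equiv.toPEquiv_trans]
        exact mul_mem hb ha }
  suffices h : P = ⊤ by
    have hm : σ ∈ P := h ▸ Submonoid.mem_top σ
    exact hm
  rcases n with _ | m
  · apply top_unique
    intro τ _
    have hτ : τ = Equiv.refl (Fin 0) := by ext i; exact absurd i.2 (by omega)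
    show τ.toPEquiv ∈ Submonoid.closure (rookGens 0)
    rw [hτ, Equiv.toPEquiv_refl, ← rook_one_def]
    exact one_mem _
  · apply top_unique
    rw [← Equiv.Perm.mclosure_swap_castSucc_succ m, Submonoid.closure_le]
    rintro _ ⟨j, rfl⟩
    show (Equiv.swap j.castSucc j.succ).toPEquiv ∈ Submonoid.closure (rookGens (m + 1))
    apply Submonoid.subset_closure
    left
    refine ⟨j.1 + 1, by omega, by omega, ?_⟩
    unfold sgen
    have e1 : (⟨j.1 + 1 - 1, by omega⟩ : Fin (m + 1)) = j.castSucc := by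
      apply Fin.ext; simp
    have e2 : (⟨j.1 + 1, by omega⟩ : Fin (m + 1)) = j.succ := by
      apply Fin.ext; simp
    rw [e1, e2]

lemma ofSet_mem (A : Set (Fin n)) [DecidablePred (· ∈ A)] :
    (PEquiv.ofSet A : Rook n) ∈ Submonoid.closure (rookGens n) := by
  rcases n with _ | m
  · have h0 : (PEquiv.ofSet A : Rook 0) = 1 := by
      ext i; exact absurd i.2 (by omega)
    rw [h0]; exact one_mem _
  have hegen : egen (m + 1) m ∈ Submonoid.closure (rookGens (m + 1)) := by
    apply Submonoid.subset_closure
    right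
    simp
  have hset : {x : Fin (m + 1) | (x : ℕ) < m} = ({⟨m, by omega⟩} : Set (Fin (m + 1)))ᶜ := by
    ext x
    have := x.2
    simp [Fin.ext_iff]
    omega
  have hsingle : ∀ y : Fin (m + 1),
      (PEquiv.ofSet ({y}ᶜ : Set (Fin (m + 1))) : Rook (m + 1)) ∈
        Submonoid.closure (rookGens (m + 1)) := by
    intro y
    set last : Fin (m + 1) := ⟨m, by omega⟩ with hlast
    set σ := Equiv.swap last y with hσ
    have key : σ.toPEquiv * egen (m + 1) m * σ⁻¹.toPEquiv
        = PEquiv.ofSet ({y}ᶜ : Set (Fin (m + 1))) := by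
      show σ.toPEquiv * PEquiv.ofSet {x : Fin (m + 1) | (x : ℕ) < m} * σ⁻¹.toPEquiv = _
      rw [conj_ofSet]
      apply ofSet_congr
      rw [hset]
      ext x
      simp only [Set.mem_preimage, Set.mem_compl_iff, Set.mem_singleton_iff]
      constructor
      · intro h hxy
        exact h (by rw [hxy, hσ]; simp [Equiv.swap_apply_right])
      · intro h hx
        apply h
        have hxs : x = σ.symm last := by rw [← hx]; simp
        rw [hxs, hσ]
        simp [Equiv.symm_swap, Equiv.swap_apply_left]
    rw [← key]
    exact mul_mem (mul_mem (perm_mem σ) hegen) (perm_mem σ⁻¹)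
  have key : ∀ s : Finset (Fin (m + 1)),
      (PEquiv.ofSet ((↑s : Set (Fin (m + 1)))ᶜ) : Rook (m + 1)) ∈
        Submonoid.closure (rookGens (m + 1)) := by
    intro s
    induction s using Finset.induction with
    | empty =>
        have h0 : (PEquiv.ofSet ((↑(∅ : Finset (Fin (m + 1))) : Set (Fin (m + 1)))ᶜ) : Rook (m+1))
            = PEquiv.ofSet Set.univ := ofSet_congr (by simp)
        rw [h0, PEquiv.ofSet_univ, ← rook_one_def]
        exact one_mem _
    | @insert a s ha ih =>
        have h0 : (PEquiv.ofSet ((↑(insert a s) : Set (Fin (m + 1)))ᶜ) : Rook (m+1))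
            = PEquiv.ofSet ({a}ᶜ : Set (Fin (m + 1)))
              * PEquiv.ofSet ((↑s : Set (Fin (m + 1)))ᶜ) := by
          rw [ofSet_mul_ofSet]
          exact ofSet_congr (by
            rw [Finset.coe_insert, Set.insert_eq, Set.compl_union])
        rw [h0]
        exact mul_mem (hsingle a) ih
  have hA : (PEquiv.ofSet A : Rook (m+1))
      = PEquiv.ofSet ((↑(Aᶜ.toFinset) : Set (Fin (m + 1))))ᶜ := ofSet_congr (by simp)
  rw [hA]
  exact key _

lemma exists_perm_extend (f : Rook n) :
    ∃ σ : Equiv.Perm (Fin n), ∀ (a : Fin n) (h : (f a).isSome), σ a = (f a).get h := by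
  classical
  let p : Fin n → Prop := fun x => (f x).isSome
  let q : Fin n → Prop := fun y => (f.symm y).isSome
  let e1 : {x // p x} ≃ {y // q y} :=
    { toFun := fun x => ⟨(f x.1).get x.2, by
        have hx : f x.1 = some ((f x.1).get x.2) := (Option.some_get x.2).symm
        have hh : f.symm ((f x.1).get x.2) = some x.1 := f.eq_some_iff.2 hx
        simp [q, hh]⟩
      invFun := fun y => ⟨(f.symm y.1).get y.2, by
        have hy : f.symm y.1 = some ((f.symm y.1).get y.2) := (Option.some_get y.2).symm
        have hh : f ((f.symm y.1).get y.2) = some y.1 := f.symm.eq_some_iff.2 hy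
        simp [p, hh]⟩
      left_inv := by
        rintro ⟨x, hx⟩
        have hfx : f x = some ((f x).get hx) := (Option.some_get hx).symm
        have h2 : f.symm ((f x).get hx) = some x := f.eq_some_iff.2 hfx
        ext
        simp [h2]
      right_inv := by
        rintro ⟨y, hy⟩
        have hfy : f.symm y = some ((f.symm y).get hy) := (Option.some_get hy).symm
        have h2 : f ((f.symm y).get hy) = some y := f.symm.eq_some_iff.2 hfy
        ext
        simp [h2] }
  have hcard : Fintype.card {x // ¬ p x} = Fintype.card {y // ¬ q y} := by
    have h1 : Fintype.card {x // p x} = Fintype.card {y // q y} := Fintype.card_congr e1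
    have h2 := Fintype.card_subtype_compl p
    have h3 := Fintype.card_subtype_compl q
    rw [h2, h3, h1]
  let e2 : {x // ¬ p x} ≃ {y // ¬ q y} := Fintype.equivOfCardEq hcard
  let σ : Equiv.Perm (Fin n) :=
    (Equiv.sumCompl p).symm.trans ((e1.sumCongr e2).trans (Equiv.sumCompl q))
  refine ⟨σ, fun a h => ?_⟩
  have h1 : (Equiv.sumCompl p).symm a = Sum.inl ⟨a, h⟩ :=
    Equiv.sumCompl_symm_apply_of_pos (p := p) h
  show ((Equiv.sumCompl q) ((e1.sumCongr e2) ((Equiv.sumCompl p).symm a))) = _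
  rw [h1]
  simp [e1]

lemma rook_decomp (f : Rook n) (σ : Equiv.Perm (Fin n))
    (hσ : ∀ (a : Fin n) (h : (f a).isSome), σ a = (f a).get h) :
    f = PEquiv.ofSet {x | (f x).isSome} * σ.toPEquiv := by
  ext a b
  simp only [rook_mul_def, Option.mem_def, PEquiv.trans_eq_some, PEquiv.ofSet_eq_some_iff,
    Equiv.toPEquiv_apply, Option.some.injEq, Set.mem_setOf_eq]
  constructor
  · intro hb
    have h : (f a).isSome := by rw [hb]; rfl
    refine ⟨a, ⟨rfl, h⟩, ?_⟩
    rw [hσ a h]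
    simp [hb]
  · rintro ⟨c, ⟨rfl, hc⟩, rfl⟩
    rw [hσ c hc]
    simp

end Aux

/-- The rook monoid is generated by the adjacent transpositions
`s_1, …, s_{n-1}` together with the single idempotent `e_{n-1}`. -/
theorem rook_generated_by_s_and_e (n : ℕ) :
    Submonoid.closure
      ({x : Rook n | ∃ (i : ℕ) (h1 : 1 ≤ i) (h2 : i ≤ n - 1), x = sgen n i h1 h2}
        ∪ {egen n (n - 1)}) = ⊤ := by
  apply top_unique
  intro f _
  obtain ⟨σ, hσ⟩ := exists_perm_extend f
  rw [rook_decomp f σ hσ]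
  exact mul_mem (ofSet_mem _) (perm_mem σ)
end

section
/- Let (W,S) be a Coxeter system, I,J ⊆ S, and w ∈ W. If ŵ is the minimal-length element of the double coset W_J w W_I, then there exist w_1 ∈ W_I and w_2 ∈ W_J such that w = w_2·ŵ·w_1 and ℓ(w) = ℓ(w_1) + ℓ(ŵ) + ℓ(w_2). -/
namespace CoxAux

open CoxeterSystem List

variable {B W : Type*} [Group W] {M : CoxeterMatrix B} (cs : CoxeterSystem M W)

local prefix:100 "s" => cs.simple
local prefix:100 "π" => cs.wordProd
local prefix:100 "ℓ" => cs.length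
local prefix:100 "ris" => cs.rightInvSeq

noncomputable section
open Classical in
/-- The permutation of `W × ℤˣ` associated to the simple reflection `i`. -/
def sigmaFun (i : B) : W × ℤˣ → W × ℤˣ :=
  fun p => (s i * p.1 * s i, if p.1 = s i then -p.2 else p.2)

open Classical in
lemma sigmaFun_invol (i : B) : Function.Involutive (sigmaFun cs i) := by
  intro p
  have key : s i * p.1 * s i = s i ↔ p.1 = s i := by
    constructor
    · intro h
      have := congrArg (fun x => s i * x * s i) h
      simpa [mul_assoc, cs.simple_mul_simple_cancel_left] using this
    · intro h; rw [h]; simp [mul_assoc, cs.simple_mul_simple_self]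
  obtain ⟨t, ε⟩ := p
  simp only [sigmaFun, key] at *
  by_cases h : t = s i <;>
    simp [h, mul_assoc, cs.simple_mul_simple_self, cs.simple_mul_simple_cancel_left]

def sigma (i : B) : Equiv.Perm (W × ℤˣ) := (sigmaFun_invol cs i).toPerm

open Classical in
lemma sigma_apply (i : B) (t : W) (ε : ℤˣ) :
    sigma cs i (t, ε) = (s i * t * s i, if t = s i then -ε else ε) := rfl

def F (ω : List B) : Equiv.Perm (W × ℤˣ) := (ω.map (sigma cs)).prod

@[simp] lemma F_nil : F cs ([] : List B) = 1 := rfl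

lemma F_cons (i : B) (ω : List B) : F cs (i :: ω) = sigma cs i * F cs ω := by
  simp [F]

lemma ris_cons (i : B) (ω : List B) :
    ris (i :: ω) = ((π ω)⁻¹ * s i * π ω) :: ris ω := rfl

open Classical in
lemma F_apply (ω : List B) (t : W) (ε : ℤˣ) :
    F cs ω (t, ε) = (π ω * t * (π ω)⁻¹, if Odd ((ris ω).count t) then -ε else ε) := by
  induction ω generalizing ε with
  | nil => simp [F]
  | cons i ω ih =>
    rw [F_cons, Equiv.Perm.mul_apply, ih, sigma_apply, ris_cons]
    have key : π ω * t * (π ω)⁻¹ = s i ↔ t = (π ω)⁻¹ * s i * π ω := by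
      constructor
      · intro h; rw [← h]; group
      · intro h; rw [h]; group
    rw [List.count_cons]
    simp only [Prod.mk.injEq]
    refine ⟨by rw [cs.wordProd_cons, mul_inv_rev, cs.inv_simple]; group, ?_⟩
    by_cases h : π ω * t * (π ω)⁻¹ = s i
    · have h2 : (π ω)⁻¹ * s i * π ω = t := (key.mp h).symm
      simp only [if_pos h, h2, beq_self_eq_true, if_true, Nat.odd_add_one]
      rcases Nat.even_or_odd ((ris ω).count t) with he | ho
      · simp [Nat.not_odd_iff_even.mpr he, he]
      · simp [ho, Nat.not_even_iff_odd.mpr ho]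
    · have h2 : ((π ω)⁻¹ * s i * π ω == t) = false := by
        simp only [beq_eq_false_iff_ne, ne_eq]
        exact fun hh => h (key.mpr hh.symm)
      simp [if_neg h, h2]

/-! ### Dihedral computations and liftability -/

section Dihedral

variable (i i' : B)

lemma aW_two_mul_succ (m : ℕ) :
    alternatingWord i i' (2 * (m + 1)) = i :: i' :: alternatingWord i i' (2 * m) := by
  have h1 : 2 * (m + 1) = (2 * m + 1) + 1 := by ring
  rw [h1, alternatingWord_succ' i i' (2 * m + 1), if_neg (by simp [Nat.even_add_one]),
    alternatingWord_succ' i i' (2 * m), if_pos (by simp)]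

lemma pow_sigma_eq_F (m : ℕ) :
    (sigma cs i * sigma cs i') ^ m = F cs (alternatingWord i i' (2 * m)) := by
  induction m with
  | zero => simp [alternatingWord]
  | succ m ih =>
    rw [pow_succ', ih, aW_two_mul_succ, F_cons, F_cons, mul_assoc]

/-- The `k`-th entry (from the right) of the right inversion sequence of an alternating word. -/
def Ent (k : ℕ) : W := (π (alternatingWord i i' k))⁻¹ * π (alternatingWord i i' (k + 1))

lemma ris_aW (n : ℕ) :
    ris (alternatingWord i i' (n + 1)) = Ent cs i i' n :: ris (alternatingWord i i' n) := by
  rw [alternatingWord_succ' i i' n, ris_cons]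
  congr 1
  rw [Ent, alternatingWord_succ' i i' n, cs.wordProd_cons]
  group

open Classical in
lemma Ent_eval (k : ℕ) :
    Ent cs i i' k = ((s i * s i') ^ (k / 2))⁻¹ *
      (if Even k then s i' else s i' * (s i * s i')) * (s i * s i') ^ (k / 2) := by
  rcases Nat.even_or_odd k with he | ho
  · rw [Ent, cs.prod_alternatingWord_eq_mul_pow, cs.prod_alternatingWord_eq_mul_pow,
      if_pos he, if_neg (by simp [Nat.even_add_one, he]), if_pos he]
    have : (k + 1) / 2 = k / 2 := by rcases he with ⟨a, ha⟩; omega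
    rw [this]
    group
  · rw [Ent, cs.prod_alternatingWord_eq_mul_pow, cs.prod_alternatingWord_eq_mul_pow,
      if_neg (Nat.not_even_iff_odd.mpr ho), if_pos (by simp [Nat.even_add_one, Nat.not_even_iff_odd.mpr ho]),
      if_neg (Nat.not_even_iff_odd.mpr ho)]
    have : (k + 1) / 2 = k / 2 + 1 := by
      rcases ho with ⟨a, rfl⟩; omega
    rw [this, one_mul, mul_inv_rev, cs.inv_simple]
    simp only [pow_succ', mul_assoc]

lemma conj_pow_q (x : ℕ) :
    s i' * (s i * s i') ^ x = ((s i * s i') ^ x)⁻¹ * s i' := by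
  induction x with
  | zero => simp
  | succ x ih =>
    have key : s i' * (s i * s i') = (s i * s i')⁻¹ * s i' := by
      rw [mul_inv_rev, cs.inv_simple, cs.inv_simple, mul_assoc]
    rw [pow_succ, ← mul_assoc, ih, mul_assoc, key, ← mul_assoc, ← mul_inv_rev, ← pow_succ',
      ← pow_succ]

section Rel

variable (mm : ℕ) (hpm : (cs.simple i * cs.simple i') ^ mm = 1)

include hpm

lemma Ent_periodic (k : ℕ) : Ent cs i i' (k + mm) = Ent cs i i' k := by
  classical
  have conj_split : ∀ (p g g' : W) (r c : ℕ), (p ^ c)⁻¹ * g' * p ^ c = g →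
      (p ^ (r + c))⁻¹ * g' * p ^ (r + c) = (p ^ r)⁻¹ * g * p ^ r := by
    intro p g g' r c hmini
    have e2 : p ^ (r + c) = p ^ c * p ^ r := by rw [add_comm, pow_add]
    rw [e2, mul_inv_rev, ← hmini]
    simp only [mul_assoc]
  set p := s i * s i' with hp
  set q := s i' with hq
  have hqp : ∀ x : ℕ, q * p ^ x = (p ^ x)⁻¹ * q := conj_pow_q cs i i'
  rw [Ent_eval, Ent_eval]
  rcases Nat.even_or_odd mm with ⟨c, hc⟩ | ⟨c, hc⟩
  · -- mm = c + c : parities agree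
    have hdiv : (k + mm) / 2 = k / 2 + c := by omega
    have hpar : Even (k + mm) ↔ Even k := by
      rw [Nat.even_iff, Nat.even_iff]; omega
    have hcc : p ^ c * p ^ c = 1 := by
      rw [← pow_add, show c + c = mm by omega]; exact hpm
    have mini1 : (p ^ c)⁻¹ * q * p ^ c = q := by
      rw [mul_assoc, hqp c, ← mul_assoc, ← mul_inv_rev, hcc]; simp
    rcases Nat.even_or_odd k with he | ho
    · rw [if_pos (hpar.mpr he), if_pos he, hdiv]
      exact conj_split p q q (k / 2) c mini1
    · rw [if_neg (fun h => (Nat.not_even_iff_odd.mpr ho) (hpar.mp h)),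
        if_neg (Nat.not_even_iff_odd.mpr ho), hdiv]
      refine conj_split p (q * p) (q * p) (k / 2) c ?_
      calc (p ^ c)⁻¹ * (q * p) * p ^ c
          = (p ^ c)⁻¹ * q * p ^ c * p := by
            simp only [mul_assoc]; rw [← pow_mul_comm']
        _ = q * p := by rw [mini1]
  · -- mm = 2 * c + 1 : parities flip
    have hdiv1 : Even k → (k + mm) / 2 = k / 2 + c := by intro ⟨a, ha⟩; omega
    have hdiv2 : ¬ Even k → (k + mm) / 2 = k / 2 + (c + 1) := by
      intro h; rcases Nat.not_even_iff_odd.mp h with ⟨a, ha⟩; omega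
    rcases Nat.even_or_odd k with he | ho
    · rw [if_neg (by rcases he with ⟨a, ha⟩; rw [Nat.even_iff]; omega),
        if_pos he, hdiv1 he]
      refine conj_split p q (q * p) (k / 2) c ?_
      simp only [mul_assoc]
      rw [← pow_succ' p c, hqp (c + 1), ← mul_assoc, ← mul_inv_rev, ← pow_add,
        show c + 1 + c = mm by omega, hpm]
      simp
    · rw [if_pos (by rcases ho with ⟨a, ha⟩; exact ⟨a + c + 1, by omega⟩),
        if_neg (Nat.not_even_iff_odd.mpr ho), hdiv2 (Nat.not_even_iff_odd.mpr ho)]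
      refine conj_split p (q * p) q (k / 2) (c + 1) ?_
      rw [mul_assoc, hqp (c + 1), ← mul_assoc, ← mul_inv_rev, ← pow_add,
        show c + 1 + (c + 1) = mm + 1 by omega, pow_succ, hpm, one_mul, mul_inv_rev,
        cs.inv_simple, cs.inv_simple, mul_assoc]

open Classical in
lemma count_ris_aW_even (t : W) :
    Even (((ris (alternatingWord i i' (2 * mm))).count t)) := by
  classical
  have hrec : ∀ n, (ris (alternatingWord i i' (n + 1))).count t =
      (if Ent cs i i' n = t then 1 else 0) + (ris (alternatingWord i i' n)).count t := by
    intro n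
    rw [ris_aW, List.count_cons]
    by_cases h : Ent cs i i' n = t <;> simp [h] <;> omega
  have hadd : ∀ r, (ris (alternatingWord i i' (mm + r))).count t =
      (ris (alternatingWord i i' mm)).count t + (ris (alternatingWord i i' r)).count t := by
    intro r
    induction r with
    | zero => simp [alternatingWord]
    | succ r ih =>
      have h1 : mm + (r + 1) = (r + mm) + 1 := by omega
      have h2 : mm + r = r + mm := by omega
      rw [h1, hrec, Ent_periodic cs i i' mm hpm r, ← h2, ih, hrec]
      omega
  have : 2 * mm = mm + mm := by omega
  rw [this, hadd]
  exact ⟨_, rfl⟩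

end Rel

end Dihedral

lemma sigma_liftable : M.IsLiftable (sigma cs) := by
  intro i i'
  rw [pow_sigma_eq_F]
  refine Equiv.ext fun x => ?_
  obtain ⟨t, ε⟩ := x
  have h1 : π (alternatingWord i i' (2 * M i i')) = 1 := by
    rw [cs.prod_alternatingWord_eq_mul_pow, if_pos (by simp [Nat.even_mul]),
      show 2 * M i i' / 2 = M i i' by omega, one_mul, cs.simple_mul_simple_pow]
  have h2 := count_ris_aW_even cs i i' (M i i') (cs.simple_mul_simple_pow i i') t
  rw [F_apply, h1, if_neg (Nat.not_odd_iff_even.mpr h2)]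
  simp

noncomputable def Phi : W →* Equiv.Perm (W × ℤˣ) := cs.lift ⟨sigma cs, sigma_liftable cs⟩

lemma Phi_wordProd (ω : List B) : Phi cs (π ω) = F cs ω := by
  induction ω with
  | nil => simp [F]
  | cons i ω ih =>
    rw [cs.wordProd_cons, map_mul, ih, F_cons, Phi, cs.lift_apply_simple]

open Classical in
lemma parity_invariance {ω ω' : List B} (hw : π ω = π ω') (t : W) :
    (Odd ((ris ω).count t) ↔ Odd ((ris ω').count t)) := by
  have h : F cs ω (t, 1) = F cs ω' (t, 1) := by
    rw [← Phi_wordProd, ← Phi_wordProd, hw]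
  rw [F_apply, F_apply] at h
  have h2 := congrArg Prod.snd h
  simp only at h2
  by_cases ho : Odd ((ris ω).count t) <;> by_cases ho' : Odd ((ris ω').count t) <;>
    simp [ho, ho'] at h2 ⊢


/-! ### The exchange and deletion conditions -/

lemma mem_ris_of_descent {ω : List B} (hω : cs.IsReduced ω) {i : B}
    (h : ℓ (π ω * s i) < ℓ (π ω)) : s i ∈ ris ω := by
  classical
  obtain ⟨ω', hred', heq'⟩ := cs.exists_reduced_word' (π ω * s i)
  have hlen : ℓ (π ω * s i) + 1 = ℓ (π ω) := by
    rcases cs.length_mul_simple (π ω) i with h1 | h1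
    · omega
    · exact h1
  have hconc : π (ω'.concat i) = π ω := by
    rw [cs.wordProd_concat, ← heq', mul_assoc, cs.simple_mul_simple_self, mul_one]
  have hredc : cs.IsReduced (ω'.concat i) := by
    unfold CoxeterSystem.IsReduced at *
    rw [hconc, List.length_concat, ← hred', ← heq', hlen]
  have hmem : s i ∈ ris (ω'.concat i) := by
    rw [cs.rightInvSeq_concat]
    simp
  have hcount : ((ris (ω'.concat i)).count (s i)) = 1 :=
    List.count_eq_one_of_mem (hredc.nodup_rightInvSeq) hmem
  have hodd := (parity_invariance cs hconc (s i)).mp (by rw [hcount]; exact odd_one)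
  have : 0 < (ris ω).count (s i) := by
    rcases hodd with ⟨c, hc⟩; omega
  exact List.count_pos_iff.mp this

lemma exchange_erase {ω : List B} (hω : cs.IsReduced ω) {i : B}
    (h : ℓ (π ω * s i) < ℓ (π ω)) : ∃ j < ω.length, π ω * s i = π (ω.eraseIdx j) := by
  have hmem := mem_ris_of_descent cs hω h
  obtain ⟨j, hj, hgetD⟩ := List.mem_iff_getElem.mp hmem
  rw [cs.length_rightInvSeq] at hj
  refine ⟨j, hj, ?_⟩
  rw [← cs.wordProd_mul_getD_rightInvSeq ω j]
  congr 1
  rw [List.getD_eq_getElem _ 1 (by rwa [cs.length_rightInvSeq])]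
  exact hgetD.symm

lemma deletion {ω : List B} (h : ℓ (π ω) < ω.length) :
    ∃ ω' : List B, ω'.length + 2 = ω.length ∧ π ω' = π ω ∧ ∀ b ∈ ω', b ∈ ω := by
  have hex : ∃ j, ¬ cs.IsReduced (ω.take (j + 1)) := by
    refine ⟨ω.length - 1, ?_⟩
    have hne : ω.length ≠ 0 := by omega
    rw [show ω.length - 1 + 1 = ω.length by omega, List.take_length]
    unfold CoxeterSystem.IsReduced
    omega
  classical
  set j := Nat.find hex with hjdef
  have hj : ¬ cs.IsReduced (ω.take (j + 1)) := Nat.find_spec hex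
  have hjle : j ≤ ω.length - 1 := Nat.find_min' hex (by
    have hne : ω.length ≠ 0 := by omega
    rw [show ω.length - 1 + 1 = ω.length by omega, List.take_length]
    unfold CoxeterSystem.IsReduced
    omega)
  have hjlt : j < ω.length := by omega
  have hred : cs.IsReduced (ω.take j) := by
    rcases Nat.eq_zero_or_pos j with h0 | hpos
    · rw [h0]; simp [CoxeterSystem.IsReduced]
    · have hmin := Nat.find_min hex (show j - 1 < j by omega)
      rw [not_not, show j - 1 + 1 = j by omega] at hmin
      exact hmin
  have htakelen : (ω.take j).length = j := by
    rw [List.length_take]; omega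
  have hlenj : ℓ (π (ω.take j)) = j := by rw [hred, htakelen]
  have htakesucc : ω.take (j + 1) = ω.take j ++ [ω[j]] := by
    rw [List.take_succ, List.getElem?_eq_getElem hjlt]
    rfl
  have hprodsucc : π (ω.take (j + 1)) = π (ω.take j) * s (ω[j]) := by
    rw [htakesucc, cs.wordProd_append]
    simp [CoxeterSystem.wordProd]
  have hdesc : ℓ (π (ω.take j) * s (ω[j])) < ℓ (π (ω.take j)) := by
    rcases cs.length_mul_simple (π (ω.take j)) (ω[j]) with h1 | h1
    · exfalso
      apply hj
      unfold CoxeterSystem.IsReduced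
      rw [hprodsucc, h1, hlenj, List.length_take]
      omega
    · omega
  obtain ⟨p, hp, herase⟩ := exchange_erase cs hred hdesc
  rw [htakelen] at hp
  refine ⟨(ω.take j).eraseIdx p ++ ω.drop (j + 1), ?_, ?_, ?_⟩
  · have h1 := List.length_eraseIdx_add_one (l := ω.take j) (i := p)
      (by rw [htakelen]; exact hp)
    rw [List.length_append, List.length_drop, htakelen] at *
    omega
  · rw [cs.wordProd_append, ← herase, ← hprodsucc, ← cs.wordProd_append,
      List.take_append_drop]
  · intro b hb
    rcases List.mem_append.mp hb with hb | hb
    · exact List.mem_of_mem_take (((ω.take j).eraseIdx_sublist p).mem hb)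
    · exact List.mem_of_mem_drop hb

/-! ### Words in a subset of the generators -/

lemma wordProd_mem_closure {I : Set B} {ω : List B} (hω : ∀ b ∈ ω, b ∈ I) :
    π ω ∈ Subgroup.closure (cs.simple '' I) := by
  induction ω with
  | nil =>
    rw [cs.wordProd_nil]
    exact one_mem _
  | cons b ω ih =>
    rw [cs.wordProd_cons]
    exact mul_mem (Subgroup.subset_closure ⟨b, hω b List.mem_cons_self, rfl⟩)
      (ih fun b' hb' => hω b' (List.mem_cons_of_mem b hb'))

lemma exists_word_of_mem {I : Set B} {v : W} (hv : v ∈ Subgroup.closure (cs.simple '' I)) :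
    ∃ ω : List B, (∀ b ∈ ω, b ∈ I) ∧ v = π ω := by
  induction hv using Subgroup.closure_induction with
  | mem x hx =>
    obtain ⟨i, hi, rfl⟩ := hx
    exact ⟨[i], by simpa using hi, by simp [CoxeterSystem.wordProd]⟩
  | one => exact ⟨[], by simp, by simp [CoxeterSystem.wordProd]⟩
  | mul x y _ _ ihx ihy =>
    obtain ⟨ω₁, h₁, rfl⟩ := ihx
    obtain ⟨ω₂, h₂, rfl⟩ := ihy
    exact ⟨ω₁ ++ ω₂, fun b hb => (List.mem_append.mp hb).elim (h₁ b) (h₂ b),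
      (cs.wordProd_append ω₁ ω₂).symm⟩
  | inv x _ ihx =>
    obtain ⟨ω₁, h₁, rfl⟩ := ihx
    exact ⟨ω₁.reverse, fun b hb => h₁ b (List.mem_reverse.mp hb),
      (cs.wordProd_reverse ω₁).symm⟩

lemma exists_reduced_word_subset {I : Set B} {v : W}
    (hv : v ∈ Subgroup.closure (cs.simple '' I)) :
    ∃ ω : List B, (∀ b ∈ ω, b ∈ I) ∧ v = π ω ∧ cs.IsReduced ω := by
  obtain ⟨ω, hω, rfl⟩ := exists_word_of_mem cs hv
  clear hv
  suffices H : ∀ (n : ℕ) (ω : List B), ω.length = n → (∀ b ∈ ω, b ∈ I) →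
      ∃ ω' : List B, (∀ b ∈ ω', b ∈ I) ∧ π ω = π ω' ∧ cs.IsReduced ω' by
    obtain ⟨ω', h1, h2, h3⟩ := H ω.length ω rfl hω
    exact ⟨ω', h1, h2, h3⟩
  intro n
  induction n using Nat.strong_induction_on with
  | _ n ih =>
    intro ω hlen hω
    rcases Nat.lt_or_ge (ℓ (π ω)) ω.length with hlt | hge
    · obtain ⟨ω', hlen', hprod', hmem'⟩ := deletion cs hlt
      obtain ⟨ω'', h1, h2, h3⟩ := ih ω'.length (by omega) ω' rfl
        (fun b hb => hω b (hmem' b hb))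
      exact ⟨ω'', h1, by rw [← hprod']; exact h2, h3⟩
    · exact ⟨ω, hω, rfl, le_antisymm (cs.length_wordProd_le ω) hge⟩

lemma exists_right_descent_in {I : Set B} {v : W}
    (hv : v ∈ Subgroup.closure (cs.simple '' I)) (hne : v ≠ 1) :
    ∃ i ∈ I, ℓ (v * s i) + 1 = ℓ v := by
  obtain ⟨ω, hω, rfl, hred⟩ := exists_reduced_word_subset cs hv
  rcases ω.eq_nil_or_concat' with rfl | ⟨L, b, rfl⟩
  · exact absurd (by simp [CoxeterSystem.wordProd]) hne
  · refine ⟨b, hω b (by simp), ?_⟩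
    have hvb : π (L ++ [b]) * s b = π L := by
      rw [cs.wordProd_append]
      simp [CoxeterSystem.wordProd, mul_assoc, cs.simple_mul_simple_self]
    have hlenL : ℓ (π L) ≤ L.length := cs.length_wordProd_le L
    have hlenv : ℓ (π (L ++ [b])) = L.length + 1 := by
      rw [hred]; simp
    rcases cs.length_mul_simple (π (L ++ [b])) b with h1 | h1
    · rw [hvb] at h1; omega
    · exact h1


/-! ### One-sided coset minimality and length additivity -/

lemma exists_min_coset (I : Set B) (w : W) :
    ∃ u v, v ∈ Subgroup.closure (cs.simple '' I) ∧ w = u * v ∧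
      ∀ v' ∈ Subgroup.closure (cs.simple '' I), ℓ u ≤ ℓ (u * v') := by
  classical
  set S : Set ℕ := {n | ∃ v ∈ Subgroup.closure (cs.simple '' I), ℓ (w * v) = n} with hS
  have hne : S.Nonempty := ⟨ℓ w, 1, one_mem _, by simp⟩
  obtain ⟨v₀, hv₀mem, hv₀len⟩ := Nat.sInf_mem hne
  refine ⟨w * v₀, v₀⁻¹, inv_mem hv₀mem, by simp [mul_assoc], ?_⟩
  intro v' hv'
  rw [hv₀len, mul_assoc]
  exact Nat.sInf_le ⟨v₀ * v', mul_mem hv₀mem hv', rfl⟩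

lemma min_additive (I : Set B) (u : W)
    (hmin : ∀ v ∈ Subgroup.closure (cs.simple '' I), ℓ u ≤ ℓ (u * v)) :
    ∀ v ∈ Subgroup.closure (cs.simple '' I), ℓ (u * v) = ℓ u + ℓ v := by
  suffices H : ∀ (n : ℕ) (v : W), v ∈ Subgroup.closure (cs.simple '' I) → ℓ v = n →
      ℓ (u * v) = ℓ u + ℓ v by
    intro v hv; exact H (ℓ v) v hv rfl
  intro n
  induction n using Nat.strong_induction_on with
  | _ n ih =>
    intro v hv hn
    by_cases h1 : v = 1
    · simp [h1]
    · obtain ⟨i, hiI, hdlen⟩ := exists_right_descent_in cs hv h1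
      set v₁ := v * s i with hv₁def
      have hv₁ : v₁ ∈ Subgroup.closure (cs.simple '' I) :=
        mul_mem hv (Subgroup.subset_closure ⟨i, hiI, rfl⟩)
      have hIH : ℓ (u * v₁) = ℓ u + ℓ v₁ := ih (ℓ v₁) (by omega) v₁ hv₁ rfl
      have hv₁v : v₁ * s i = v := by
        rw [hv₁def, mul_assoc, cs.simple_mul_simple_self, mul_one]
      have huv : u * v = (u * v₁) * s i := by rw [mul_assoc, hv₁v]
      rcases cs.length_mul_simple (u * v₁) i with hc | hc
      · rw [huv, hc, hIH]; omega
      · exfalso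
        obtain ⟨ωu, hredu, hequ⟩ := cs.exists_reduced_word' u
        obtain ⟨ω₁, hω₁I, heq₁, hred₁⟩ := exists_reduced_word_subset cs hv₁
        unfold CoxeterSystem.IsReduced at hredu hred₁
        have hlen_u : ωu.length = ℓ u := by rw [← hredu, ← hequ]
        have hlen_1 : ω₁.length = ℓ v₁ := by rw [← hred₁, ← heq₁]
        have hprodcat : π (ωu ++ ω₁) = u * v₁ := by
          rw [cs.wordProd_append, ← hequ, ← heq₁]
        have hredcat : cs.IsReduced (ωu ++ ω₁) := by
          unfold CoxeterSystem.IsReduced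
          rw [hprodcat, hIH, List.length_append]
          omega
        have hdesc : ℓ (π (ωu ++ ω₁) * s i) < ℓ (π (ωu ++ ω₁)) := by
          rw [hprodcat]
          omega
        obtain ⟨p, hp, herase⟩ := exchange_erase cs hredcat hdesc
        rw [hprodcat, ← huv] at herase
        rw [List.length_append] at hp
        rcases Nat.lt_or_ge p ωu.length with hplt | hpge
        · rw [List.eraseIdx_append_of_lt_length hplt, cs.wordProd_append, ← heq₁] at herase
          have hut : u * (v * v₁⁻¹) = π (ωu.eraseIdx p) := by
            rw [← mul_assoc, herase, mul_assoc, mul_inv_cancel, mul_one]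
          have hmem_t : v * v₁⁻¹ ∈ Subgroup.closure (cs.simple '' I) :=
            mul_mem hv (inv_mem hv₁)
          have hlen_t : ℓ (u * (v * v₁⁻¹)) ≤ ωu.length - 1 := by
            rw [hut]
            have h2 := cs.length_wordProd_le (ωu.eraseIdx p)
            have h3 := List.length_eraseIdx_add_one hplt
            omega
          have := hmin (v * v₁⁻¹) hmem_t
          omega
        · rw [List.eraseIdx_append_of_length_le hpge, cs.wordProd_append, ← hequ] at herase
          have hveq : v = π (ω₁.eraseIdx (p - ωu.length)) := mul_left_cancel herase
          have h2 := cs.length_wordProd_le (ω₁.eraseIdx (p - ωu.length))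
          have h3 := List.length_eraseIdx_add_one
            (show p - ωu.length < ω₁.length by omega)
          rw [← hveq] at h2
          omega

lemma noDescent_additive (I : Set B) (w : W)
    (h : ∀ i ∈ I, ¬ ℓ (w * s i) < ℓ w) :
    ∀ v ∈ Subgroup.closure (cs.simple '' I), ℓ (w * v) = ℓ w + ℓ v := by
  obtain ⟨u, v₀, hv₀, hw, hmin⟩ := exists_min_coset cs I w
  have hadd := min_additive cs I u hmin
  have hv1 : v₀ = 1 := by
    by_contra hne
    obtain ⟨i, hiI, hdlen⟩ := exists_right_descent_in cs hv₀ hne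
    have h1 : ℓ (w * s i) = ℓ u + ℓ (v₀ * s i) := by
      rw [hw, mul_assoc]
      exact hadd _ (mul_mem hv₀ (Subgroup.subset_closure ⟨i, hiI, rfl⟩))
    have h2 : ℓ w = ℓ u + ℓ v₀ := by rw [hw]; exact hadd v₀ hv₀
    exact h i hiI (by omega)
  rw [hv1, mul_one] at hw
  subst hw
  exact hadd

lemma noDescent_additive_left (J : Set B) (w : W)
    (h : ∀ j ∈ J, ¬ ℓ (s j * w) < ℓ w) :
    ∀ u ∈ Subgroup.closure (cs.simple '' J), ℓ (u * w) = ℓ u + ℓ w := by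
  have h' : ∀ j ∈ J, ¬ ℓ (w⁻¹ * s j) < ℓ w⁻¹ := by
    intro j hj hlt
    apply h j hj
    have e : (w⁻¹ * s j)⁻¹ = s j * w := by rw [mul_inv_rev, inv_inv, cs.inv_simple]
    have e2 : ℓ (s j * w) = ℓ (w⁻¹ * s j) := by rw [← e, cs.length_inv]
    rw [e2]
    rwa [cs.length_inv] at hlt
  intro u hu
  have hmain := noDescent_additive cs J w⁻¹ h' u⁻¹ (inv_mem hu)
  calc ℓ (u * w) = ℓ ((u * w)⁻¹) := (cs.length_inv _).symm
    _ = ℓ (w⁻¹ * u⁻¹) := by rw [mul_inv_rev]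
    _ = ℓ w⁻¹ + ℓ u⁻¹ := hmain
    _ = ℓ u + ℓ w := by rw [cs.length_inv, cs.length_inv]; omega

lemma exists_left_descent_in {J : Set B} {u : W}
    (hu : u ∈ Subgroup.closure (cs.simple '' J)) (hne : u ≠ 1) :
    ∃ j ∈ J, ℓ (s j * u) + 1 = ℓ u := by
  obtain ⟨j, hjJ, hdlen⟩ := exists_right_descent_in cs (inv_mem hu) (by simpa using hne)
  refine ⟨j, hjJ, ?_⟩
  have e : (u⁻¹ * s j)⁻¹ = s j * u := by rw [mul_inv_rev, inv_inv, cs.inv_simple]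
  have h1 : ℓ (s j * u) = ℓ (u⁻¹ * s j) := by rw [← e, cs.length_inv]
  rw [h1, ← cs.length_inv u]
  exact hdlen


/-! ### Deodhar-type lemma: pushing a `W_J`-multiple of `wh` to the canonical form -/

lemma deodhar (I J : Set B) (wh : W)
    (hI : ∀ i ∈ I, ¬ ℓ (wh * s i) < ℓ wh)
    (hJ : ∀ j ∈ J, ¬ ℓ (s j * wh) < ℓ wh) :
    ∀ (n : ℕ) (u : W), u ∈ Subgroup.closure (cs.simple '' J) → ℓ u = n →
      ∃ u₂ ∈ Subgroup.closure (cs.simple '' J), ∃ v₂ ∈ Subgroup.closure (cs.simple '' I),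
        u * wh = u₂ * wh * v₂ ∧ (∀ i ∈ I, ¬ ℓ (u₂ * wh * s i) < ℓ (u₂ * wh)) ∧ ℓ u₂ ≤ n := by
  intro n
  induction n using Nat.strong_induction_on with
  | _ n ih =>
    intro u hu hlen
    by_cases hu1 : u = 1
    · subst hu1
      refine ⟨1, one_mem _, 1, one_mem _, by simp, ?_, by simp⟩
      simpa using hI
    · obtain ⟨j, hjJ, hjlen⟩ := exists_left_descent_in cs hu hu1
      have hsj : s j ∈ Subgroup.closure (cs.simple '' J) :=
        Subgroup.subset_closure ⟨j, hjJ, rfl⟩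
      set u₁ := s j * u with hu₁def
      have hu₁mem : u₁ ∈ Subgroup.closure (cs.simple '' J) := mul_mem hsj hu
      have hu₁len : ℓ u₁ + 1 = n := by rw [← hlen]; exact hjlen
      obtain ⟨u₂, hu₂, v₂, hv₂, heq, hnd, hle⟩ := ih (ℓ u₁) (by omega) u₁ hu₁mem rfl
      have hueq : u = s j * u₁ := by
        rw [hu₁def, ← mul_assoc, cs.simple_mul_simple_self, one_mul]
      have hkey : u * wh = s j * (u₂ * wh) * v₂ := by
        rw [hueq, mul_assoc, heq]
        simp only [mul_assoc]
      by_cases hA : ∀ i ∈ I, ¬ ℓ (s j * (u₂ * wh) * s i) < ℓ (s j * (u₂ * wh))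
      · refine ⟨s j * u₂, mul_mem hsj hu₂, v₂, hv₂, ?_, ?_, ?_⟩
        · rw [hkey]; simp only [mul_assoc]
        · intro i hi
          have h6 := hA i hi
          simpa only [mul_assoc] using h6
        · rcases cs.length_simple_mul u₂ j with hB | hB <;> omega
      · push_neg at hA
        obtain ⟨i, hiI, hilt⟩ := hA
        rcases cs.length_simple_mul (u₂ * wh) j with hB | hB
        · -- length goes up: exchange in the word `j :: ωm`
          obtain ⟨ωm, hredm, heqm⟩ := cs.exists_reduced_word' (u₂ * wh)
          unfold CoxeterSystem.IsReduced at hredm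
          rw [← heqm] at hredm
          have hredjm : cs.IsReduced (j :: ωm) := by
            unfold CoxeterSystem.IsReduced
            rw [cs.wordProd_cons, ← heqm, hB, List.length_cons]
            omega
          have hdesc' : ℓ (π (j :: ωm) * s i) < ℓ (π (j :: ωm)) := by
            rw [cs.wordProd_cons, ← heqm]
            exact hilt
          obtain ⟨p, hp, herase⟩ := exchange_erase cs hredjm hdesc'
          rw [cs.wordProd_cons, ← heqm] at herase
          rcases p with _ | p'
          · -- the erased letter is `j` : then s j * m * s i = m
            have h0 : s j * (u₂ * wh) * s i = u₂ * wh := by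
              rw [herase]
              show π ((j :: ωm).eraseIdx 0) = u₂ * wh
              rw [List.eraseIdx_cons_zero, ← heqm]
            have h1 : s j * (u₂ * wh) = u₂ * wh * s i := by
              have h2 := congrArg (fun x => x * s i) h0
              rw [← h2, mul_assoc, mul_assoc, cs.simple_mul_simple_self, mul_one]
            refine ⟨u₂, hu₂, s i * v₂,
              mul_mem (Subgroup.subset_closure ⟨i, hiI, rfl⟩) hv₂, ?_, hnd, by omega⟩
            rw [hkey, h1]; simp only [mul_assoc]
          · -- the erased letter is in ωm : contradicts that u₂ * wh has no I-descent
            exfalso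
            have herase2 : s j * ((u₂ * wh) * s i) = s j * π (ωm.eraseIdx p') := by
              rw [← mul_assoc, herase]
              show π ((j :: ωm).eraseIdx (p' + 1)) = _
              rw [List.eraseIdx_cons_succ, cs.wordProd_cons]
            have h3 : (u₂ * wh) * s i = π (ωm.eraseIdx p') := mul_left_cancel herase2
            have h4 := cs.length_wordProd_le (ωm.eraseIdx p')
            rw [List.length_cons] at hp
            have h5 := List.length_eraseIdx_add_one (show p' < ωm.length by omega)
            rw [← h3] at h4
            exact hnd i hiI (by omega)
        · -- length goes down: recurse on s j * u₂
          have hlm : ℓ (u₂ * wh) = ℓ u₂ + ℓ wh := noDescent_additive_left cs J wh hJ u₂ hu₂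
          have hljm : ℓ (s j * (u₂ * wh)) = ℓ (s j * u₂) + ℓ wh := by
            rw [← mul_assoc]
            exact noDescent_additive_left cs J wh hJ (s j * u₂) (mul_mem hsj hu₂)
          obtain ⟨u₃, hu₃, v₃, hv₃, heq₃, hnd₃, hle₃⟩ :=
            ih (ℓ (s j * u₂)) (by omega) (s j * u₂) (mul_mem hsj hu₂) rfl
          refine ⟨u₃, hu₃, v₃ * v₂, mul_mem hv₃ hv₂, ?_, hnd₃, by omega⟩
          rw [hkey, ← mul_assoc (s j) u₂ wh, heq₃]
          simp only [mul_assoc]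


/-! ### Main lemma -/

lemma main_aux (I J : Set B) (wh : W)
    (hI : ∀ i ∈ I, ¬ ℓ (wh * s i) < ℓ wh)
    (hJ : ∀ j ∈ J, ¬ ℓ (s j * wh) < ℓ wh) :
    ∀ (n : ℕ) (w : W), ℓ w = n →
      (∃ a ∈ Subgroup.closure (cs.simple '' J), ∃ b ∈ Subgroup.closure (cs.simple '' I),
        w = a * wh * b) →
      ∃ w₁ ∈ Subgroup.closure (cs.simple '' I), ∃ w₂ ∈ Subgroup.closure (cs.simple '' J),
        w = w₂ * wh * w₁ ∧ ℓ w = ℓ w₁ + ℓ wh + ℓ w₂ := by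
  intro n
  induction n using Nat.strong_induction_on with
  | _ n ih =>
    rintro w hn ⟨a, ha, b, hb, hab⟩
    by_cases hc1 : ∃ i ∈ I, ℓ (w * s i) < ℓ w
    · obtain ⟨i, hiI, hilt⟩ := hc1
      have hsi : s i ∈ Subgroup.closure (cs.simple '' I) :=
        Subgroup.subset_closure ⟨i, hiI, rfl⟩
      have hwi : ℓ (w * s i) + 1 = ℓ w := by
        rcases cs.length_mul_simple w i with h | h <;> omega
      have hcos : w * s i = a * wh * (b * s i) := by rw [hab]; simp only [mul_assoc]
      obtain ⟨w₁, hw₁, w₂, hw₂, heq, hadd⟩ := ih (ℓ (w * s i)) (by omega) (w * s i) rfl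
        ⟨a, ha, b * s i, mul_mem hb hsi, hcos⟩
      have hw : w = w₂ * wh * (w₁ * s i) := by
        calc w = (w * s i) * s i := by
              rw [mul_assoc, cs.simple_mul_simple_self, mul_one]
          _ = (w₂ * wh * w₁) * s i := by rw [heq]
          _ = w₂ * wh * (w₁ * s i) := by simp only [mul_assoc]
      rcases cs.length_mul_simple w₁ i with hd | hd
      · exact ⟨w₁ * s i, mul_mem hw₁ hsi, w₂, hw₂, hw, by omega⟩
      · exfalso
        have h1 : ℓ w ≤ ℓ (w₂ * wh) + ℓ (w₁ * s i) := by
          rw [hw]; exact cs.length_mul_le _ _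
        have h2 : ℓ (w₂ * wh) ≤ ℓ w₂ + ℓ wh := cs.length_mul_le _ _
        omega
    · by_cases hc2 : ∃ j ∈ J, ℓ (s j * w) < ℓ w
      · obtain ⟨j, hjJ, hjlt⟩ := hc2
        have hsj : s j ∈ Subgroup.closure (cs.simple '' J) :=
          Subgroup.subset_closure ⟨j, hjJ, rfl⟩
        have hwj : ℓ (s j * w) + 1 = ℓ w := by
          rcases cs.length_simple_mul w j with h | h <;> omega
        have hcos : s j * w = (s j * a) * wh * b := by rw [hab]; simp only [mul_assoc]
        obtain ⟨w₁, hw₁, w₂, hw₂, heq, hadd⟩ := ih (ℓ (s j * w)) (by omega) (s j * w) rfl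
          ⟨s j * a, mul_mem hsj ha, b, hb, hcos⟩
        have hw : w = (s j * w₂) * wh * w₁ := by
          calc w = s j * (s j * w) := by
                rw [← mul_assoc, cs.simple_mul_simple_self, one_mul]
            _ = s j * (w₂ * wh * w₁) := by rw [heq]
            _ = (s j * w₂) * wh * w₁ := by simp only [mul_assoc]
        rcases cs.length_simple_mul w₂ j with he | he
        · exact ⟨w₁, hw₁, s j * w₂, mul_mem hsj hw₂, hw, by omega⟩
        · exfalso
          have h1 : ℓ w ≤ ℓ ((s j * w₂) * wh) + ℓ w₁ := by
            rw [hw]; exact cs.length_mul_le _ _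
          have h2 : ℓ ((s j * w₂) * wh) ≤ ℓ (s j * w₂) + ℓ wh := cs.length_mul_le _ _
          omega
      · -- no descents : w = wh
        have hc1' : ∀ i ∈ I, ¬ ℓ (w * s i) < ℓ w := fun i hi h => hc1 ⟨i, hi, h⟩
        have hc2' : ∀ j ∈ J, ¬ ℓ (s j * w) < ℓ w := fun j hj h => hc2 ⟨j, hj, h⟩
        obtain ⟨u₂, hu₂, v₂, hv₂, heqD, hndD, _⟩ := deodhar cs I J wh hI hJ (ℓ a) a ha rfl
        set c := v₂ * b with hcdef
        have hcmem : c ∈ Subgroup.closure (cs.simple '' I) := mul_mem hv₂ hb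
        have hwm : w = (u₂ * wh) * c := by
          rw [hab, heqD, hcdef]; simp only [mul_assoc]
        have haddw := noDescent_additive cs I w hc1'
        have haddm := noDescent_additive cs I (u₂ * wh) hndD
        have h1 : ℓ w = ℓ (u₂ * wh) + ℓ c := by rw [hwm]; exact haddm c hcmem
        have h2 : ℓ (u₂ * wh) = ℓ w + ℓ c⁻¹ := by
          have hq : u₂ * wh = w * c⁻¹ := by rw [hwm, mul_assoc, mul_inv_cancel, mul_one]
          rw [hq]; exact haddw c⁻¹ (inv_mem hcmem)
        have hc0 : ℓ c = 0 := by have := cs.length_inv c; omega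
        have hceq : c = 1 := cs.length_eq_zero_iff.mp hc0
        have hw2 : w = u₂ * wh := by rw [hwm, hceq, mul_one]
        have haddwL := noDescent_additive_left cs J w hc2'
        have haddwhL := noDescent_additive_left cs J wh hJ
        have h3 : ℓ w = ℓ u₂ + ℓ wh := by rw [hw2]; exact haddwhL u₂ hu₂
        have h4 : ℓ wh = ℓ u₂⁻¹ + ℓ w := by
          have hq : wh = u₂⁻¹ * w := by rw [hw2, ← mul_assoc, inv_mul_cancel, one_mul]
          rw [hq]; exact haddwL u₂⁻¹ (inv_mem hu₂)
        have hu0 : ℓ u₂ = 0 := by have := cs.length_inv u₂; omega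
        have hfin : w = wh := by rw [hw2, cs.length_eq_zero_iff.mp hu0, one_mul]
        exact ⟨1, one_mem _, 1, one_mem _, by rw [hfin]; simp, by simp [hfin]⟩

end

end CoxAux


/-- In a Coxeter system `(W, S)`, if `wh` is the minimal-length element of the
double coset `W_J · w · W_I`, then `w = w₂ · wh · w₁` for some `w₁ ∈ W_I`,
`w₂ ∈ W_J` with `ℓ(w) = ℓ(w₁) + ℓ(wh) + ℓ(w₂)`. -/
theorem coxeter_double_coset_length_decomposition {B W : Type*} [Group W]
    {M : CoxeterMatrix B} (cs : CoxeterSystem M W) (I J : Set B) (w wh : W)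
    (hmem : ∃ u ∈ Subgroup.closure (cs.simple '' J),
      ∃ v ∈ Subgroup.closure (cs.simple '' I), wh = u * w * v)
    (hmin : ∀ x : W,
      (∃ u ∈ Subgroup.closure (cs.simple '' J),
        ∃ v ∈ Subgroup.closure (cs.simple '' I), x = u * w * v) →
      cs.length wh ≤ cs.length x) :
    ∃ w₁ ∈ Subgroup.closure (cs.simple '' I),
      ∃ w₂ ∈ Subgroup.closure (cs.simple '' J),
        w = w₂ * wh * w₁ ∧
        cs.length w = cs.length w₁ + cs.length wh + cs.length w₂ := by
  obtain ⟨u, hu, v, hv, hwh⟩ := hmem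
  have hI : ∀ i ∈ I, ¬ cs.length (wh * cs.simple i) < cs.length wh := by
    intro i hi hlt
    have hx := hmin (wh * cs.simple i) ⟨u, hu, v * cs.simple i,
      mul_mem hv (Subgroup.subset_closure ⟨i, hi, rfl⟩), by rw [hwh]; simp only [mul_assoc]⟩
    omega
  have hJ : ∀ j ∈ J, ¬ cs.length (cs.simple j * wh) < cs.length wh := by
    intro j hj hlt
    have hx := hmin (cs.simple j * wh) ⟨cs.simple j * u,
      mul_mem (Subgroup.subset_closure ⟨j, hj, rfl⟩) hu, v, hv,
      by rw [hwh]; simp only [mul_assoc]⟩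
    omega
  have hcos : w = u⁻¹ * wh * v⁻¹ := by rw [hwh]; group
  exact CoxAux.main_aux cs I J wh hI hJ (cs.length w) w rfl
    ⟨u⁻¹, inv_mem hu, v⁻¹, inv_mem hv, hcos⟩
end

section
/- Define a length function ℓ on the rook monoid R_n by: ℓ(w) is the minimal total number of transposition letters among all expressions of w as a word in the generators s_1,…,s_{n−1}, e_0,…,e_{n−1} (where each s_i counts 1 and each e_j counts 0). Then ℓ restricted to the unit group S_n of R_n coincides with the Coxeter length on S_n. -/
open scoped Classical

def IsSGen (n : ℕ) (x : Rook n) : Prop :=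
  ∃ (i : ℕ) (h1 : 1 ≤ i) (h2 : i ≤ n - 1), x = sgen n i h1 h2

def IsEGen (n : ℕ) (x : Rook n) : Prop := ∃ j ≤ n - 1, x = egen n j

noncomputable def wt (n : ℕ) (x : Rook n) : ℕ := if IsSGen n x then 1 else 0

noncomputable def rookLength (n : ℕ) (w : Rook n) : ℕ :=
  sInf {k | ∃ l : List (Rook n), (∀ x ∈ l, IsSGen n x ∨ IsEGen n x) ∧
    l.prod = w ∧ k = (l.map (wt n)).sum}

noncomputable def coxLength (n : ℕ) (p : Equiv.Perm (Fin n)) : ℕ :=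
  (Finset.univ.filter (fun q : Fin n × Fin n => q.1 < q.2 ∧ p q.2 < p q.1)).card

section Aux

variable {n : ℕ}

noncomputable def invSet (n : ℕ) (p : Equiv.Perm (Fin n)) : Finset (Fin n × Fin n) :=
  Finset.univ.filter (fun q : Fin n × Fin n => q.1 < q.2 ∧ p q.2 < p q.1)

lemma coxLength_eq (p : Equiv.Perm (Fin n)) : coxLength n p = (invSet n p).card := rfl

lemma swap_lt_iff {u v x y : Fin n} (huv : (u:ℕ)+1 = v) (hxy : x < y) :
    Equiv.swap u v y < Equiv.swap u v x ↔ x = u ∧ y = v := by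
  have h1 : Equiv.swap u v x = if x = u then v else if x = v then u else x :=
    Equiv.swap_apply_def u v x
  have h2 : Equiv.swap u v y = if y = u then v else if y = v then u else y :=
    Equiv.swap_apply_def u v y
  rw [h1, h2]
  rw [Fin.lt_def] at hxy ⊢
  split_ifs <;> simp only [Fin.ext_iff, Fin.lt_def] at * <;> omega

lemma step_le {u v : Fin n} (huv : (u:ℕ)+1 = v) (q : Equiv.Perm (Fin n)) :
    coxLength n (Equiv.swap u v * q) ≤ coxLength n q + 1 := by
  rw [coxLength_eq, coxLength_eq]
  have hsub : invSet n (Equiv.swap u v * q) ⊆ insert (q⁻¹ u, q⁻¹ v) (invSet n q) := by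
    rintro ⟨a, b⟩ hab
    simp only [invSet, Finset.mem_filter, Finset.mem_univ, true_and] at hab
    simp only [Equiv.Perm.mul_apply] at hab
    obtain ⟨hab1, hab2⟩ := hab
    by_cases h : q b < q a
    · exact Finset.mem_insert_of_mem (by simp [invSet, hab1, h])
    · have hne : q a ≠ q b := fun h' => absurd (q.injective h') (ne_of_lt hab1)
      have hlt : q a < q b := lt_of_le_of_ne (not_lt.mp h) hne
      obtain ⟨h1, h2⟩ := (swap_lt_iff huv hlt).mp hab2
      refine Finset.mem_insert.mpr (Or.inl ?_)
      rw [Prod.ext_iff]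
      exact ⟨by simp [← h1], by simp [← h2]⟩
  calc (invSet n (Equiv.swap u v * q)).card
      ≤ (insert (q⁻¹ u, q⁻¹ v) (invSet n q)).card := Finset.card_le_card hsub
    _ ≤ (invSet n q).card + 1 := Finset.card_insert_le _ _

lemma step_lt {u v : Fin n} (huv : (u:ℕ)+1 = v) {q : Equiv.Perm (Fin n)}
    (hq : q⁻¹ v < q⁻¹ u) :
    coxLength n (Equiv.swap u v * q) < coxLength n q := by
  have huvlt : u < v := by rw [Fin.lt_def]; omega
  have hmem : (q⁻¹ v, q⁻¹ u) ∈ invSet n q := by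
    simp only [invSet, Finset.mem_filter, Finset.mem_univ, true_and]
    refine ⟨hq, ?_⟩
    simp [huvlt]
  have hsub : invSet n (Equiv.swap u v * q) ⊆ (invSet n q).erase (q⁻¹ v, q⁻¹ u) := by
    rintro ⟨a, b⟩ hab
    simp only [invSet, Finset.mem_filter, Finset.mem_univ, true_and] at hab
    simp only [Equiv.Perm.mul_apply] at hab
    obtain ⟨hab1, hab2⟩ := hab
    have hba : q b < q a := by
      by_contra h
      have hne : q a ≠ q b := fun h' => absurd (q.injective h') (ne_of_lt hab1)
      have hlt : q a < q b := lt_of_le_of_ne (not_lt.mp h) hne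
      obtain ⟨h1, h2⟩ := (swap_lt_iff huv hlt).mp hab2
      have ha : a = q⁻¹ u := by simp [← h1]
      have hb : b = q⁻¹ v := by simp [← h2]
      rw [ha, hb] at hab1
      exact absurd hab1 (not_lt.mpr (le_of_lt hq))
    refine Finset.mem_erase.mpr ⟨?_, by simp [invSet, hab1, hba]⟩
    intro hcon
    rw [Prod.ext_iff] at hcon
    obtain ⟨ha, hb⟩ := hcon
    simp only at ha hb
    rw [ha, hb] at hab2
    simp only [Equiv.Perm.inv_def, Equiv.apply_symm_apply] at hab2
    rw [Equiv.swap_apply_left, Equiv.swap_apply_right] at hab2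
    exact absurd hab2 (not_lt.mpr (le_of_lt huvlt))
  rw [coxLength_eq, coxLength_eq]
  have h1 : (invSet n (Equiv.swap u v * q)).card ≤ ((invSet n q).erase (q⁻¹ v, q⁻¹ u)).card :=
    Finset.card_le_card hsub
  have h2 : ((invSet n q).erase (q⁻¹ v, q⁻¹ u)).card = (invSet n q).card - 1 :=
    Finset.card_erase_of_mem hmem
  have h3 : 0 < (invSet n q).card := Finset.card_pos.mpr ⟨_, hmem⟩
  omega

lemma no_descent {q : Equiv.Perm (Fin n)}
    (h : ∀ u v : Fin n, (u:ℕ)+1 = v → q⁻¹ u < q⁻¹ v) : q = 1 := by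
  cases n with
  | zero => exact Equiv.ext fun x => x.elim0
  | succ m =>
    have hsm : StrictMono (fun x => q⁻¹ x : Fin (m+1) → Fin (m+1)) := by
      rw [Fin.strictMono_iff_lt_succ]
      intro i
      exact h (Fin.castSucc i) i.succ (by simp)
    have hsurj : Function.Surjective (fun x => q⁻¹ x : Fin (m+1) → Fin (m+1)) :=
      fun y => ⟨q y, by simp⟩
    have hid : (fun x => q⁻¹ x : Fin (m+1) → Fin (m+1)) = (id : Fin (m+1) → Fin (m+1)) := by
      let g := StrictMono.orderIsoOfSurjective _ hsm hsurj
      have hg : g = OrderIso.refl _ := Subsingleton.elim _ _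
      funext x
      have : g x = x := by rw [hg]; rfl
      simpa [g, StrictMono.coe_orderIsoOfSurjective] using this
    have : q⁻¹ = 1 := Equiv.ext fun x => congrFun hid x
    rwa [inv_eq_one] at this

lemma exists_word (n : ℕ) (q : Equiv.Perm (Fin n)) :
    ∃ l : List (Equiv.Perm (Fin n)),
      (∀ s ∈ l, ∃ u v : Fin n, (u:ℕ)+1 = v ∧ s = Equiv.swap u v) ∧
      l.prod = q ∧ l.length ≤ coxLength n q := by
  suffices H : ∀ k, ∀ q : Equiv.Perm (Fin n), coxLength n q ≤ k →
      ∃ l : List (Equiv.Perm (Fin n)),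
        (∀ s ∈ l, ∃ u v : Fin n, (u:ℕ)+1 = v ∧ s = Equiv.swap u v) ∧
        l.prod = q ∧ l.length ≤ coxLength n q by
    exact H (coxLength n q) q le_rfl
  intro k
  induction k with
  | zero =>
    intro q hq
    by_cases hq1 : q = 1
    · exact ⟨[], by simp, by simp [hq1], by simp⟩
    · exfalso
      have : ¬ ∀ u v : Fin n, (u:ℕ)+1 = v → q⁻¹ u < q⁻¹ v := fun hc => hq1 (no_descent hc)
      push_neg at this
      obtain ⟨u, v, huv, hlt⟩ := this
      have hne : q⁻¹ v ≠ q⁻¹ u := by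
        intro h
        have : v = u := q⁻¹.injective h
        rw [this] at huv
        omega
      have hdes : q⁻¹ v < q⁻¹ u := lt_of_le_of_ne hlt hne
      have := step_lt huv hdes
      omega
  | succ k ih =>
    intro q hq
    by_cases hq1 : q = 1
    · exact ⟨[], by simp, by simp [hq1], by simp⟩
    · have : ¬ ∀ u v : Fin n, (u:ℕ)+1 = v → q⁻¹ u < q⁻¹ v := fun hc => hq1 (no_descent hc)
      push_neg at this
      obtain ⟨u, v, huv, hlt⟩ := this
      have hne : q⁻¹ v ≠ q⁻¹ u := by
        intro h
        have : v = u := q⁻¹.injective h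
        rw [this] at huv
        omega
      have hdes : q⁻¹ v < q⁻¹ u := lt_of_le_of_ne hlt hne
      have hstep := step_lt huv hdes
      obtain ⟨l', hl'gen, hl'prod, hl'len⟩ := ih (Equiv.swap u v * q) (by omega)
      refine ⟨Equiv.swap u v :: l', ?_, ?_, ?_⟩
      · intro s hs
        rcases List.mem_cons.mp hs with hs | hs
        · exact ⟨u, v, huv, hs⟩
        · exact hl'gen s hs
      · rw [List.prod_cons, hl'prod, Equiv.swap_mul_self_mul]
      · simp only [List.length_cons]
        omega

lemma word_ge (n : ℕ) (l : List (Equiv.Perm (Fin n)))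
    (h : ∀ s ∈ l, ∃ u v : Fin n, (u:ℕ)+1 = v ∧ s = Equiv.swap u v) :
    coxLength n l.prod ≤ l.length := by
  induction l with
  | nil =>
    simp only [List.prod_nil, List.length_nil, Nat.le_zero, coxLength_eq]
    rw [Finset.card_eq_zero]
    ext ⟨a, b⟩
    simp only [invSet, Finset.mem_filter, Finset.mem_univ, true_and, Finset.notMem_empty,
      iff_false, not_and]
    simp only [Equiv.Perm.one_apply]
    intro h1
    exact not_lt.mpr (le_of_lt h1)
  | cons x t ih =>
    obtain ⟨u, v, huv, hx⟩ := h x (List.mem_cons_self)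
    rw [List.prod_cons, hx]
    calc coxLength n (Equiv.swap u v * t.prod) ≤ coxLength n t.prod + 1 := step_le huv t.prod
      _ ≤ t.length + 1 := by
          have := ih (fun s hs => h s (List.mem_cons_of_mem _ hs))
          omega

end Aux

section Aux2

variable {n : ℕ}

lemma toPEquiv_inj {f g : Equiv.Perm (Fin n)} (h : f.toPEquiv = g.toPEquiv) : f = g := by
  apply Equiv.ext
  intro x
  have hx : f.toPEquiv x = g.toPEquiv x := by rw [h]
  rw [Equiv.toPEquiv_apply, Equiv.toPEquiv_apply] at hx
  exact Option.some.inj hx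

lemma map_toPEquiv_prod (l : List (Equiv.Perm (Fin n))) :
    ((l.map Equiv.toPEquiv).prod : Rook n) = (l.reverse.prod).toPEquiv := by
  induction l with
  | nil => rfl
  | cons x t ih =>
    rw [List.map_cons, List.prod_cons, ih, List.reverse_cons, List.prod_append,
      List.prod_singleton]
    rw [show t.reverse.prod * x = x.trans t.reverse.prod from rfl, Equiv.toPEquiv_trans]
    rfl

noncomputable def dom (f : Rook n) : Finset (Fin n) :=
  Finset.univ.filter fun x => (f x).isSome

lemma dom_mul_subset (f g : Rook n) : dom (f * g) ⊆ dom f := by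
  intro x hx
  simp only [dom, Finset.mem_filter, Finset.mem_univ, true_and] at hx ⊢
  rw [show (f * g) x = (f x).bind g from rfl] at hx
  cases hfx : f x with
  | none => rw [hfx] at hx; simp at hx
  | some y => simp

lemma card_dom_mul_le (hn : 0 < n) (f g : Rook n) : (dom (f * g)).card ≤ (dom g).card := by
  apply Finset.card_le_card_of_injOn (fun x => (f x).getD ⟨0, hn⟩)
  · intro x hx
    simp only [dom, Finset.coe_filter, Set.mem_setOf_eq, Finset.mem_univ, true_and] at hx ⊢
    rw [show (f * g) x = (f x).bind g from rfl] at hx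
    cases hfx : f x with
    | none => rw [hfx] at hx; simp at hx
    | some y => rw [hfx] at hx; simpa using hx
  · intro x1 h1 x2 h2 heq
    simp only [dom, Finset.coe_filter, Set.mem_setOf_eq, Finset.mem_univ, true_and] at h1 h2
    rw [show (f * g) x1 = (f x1).bind g from rfl] at h1
    rw [show (f * g) x2 = (f x2).bind g from rfl] at h2
    simp only at heq
    cases hf1 : f x1 with
    | none => rw [hf1] at h1; simp at h1
    | some y1 =>
      cases hf2 : f x2 with
      | none => rw [hf2] at h2; simp at h2
      | some y2 =>
        rw [hf1, hf2] at heq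
        simp only [Option.getD_some] at heq
        subst heq
        have e1 : f.symm y1 = some x1 := (f.eq_some_iff).mpr hf1
        have e2 : f.symm y1 = some x2 := (f.eq_some_iff).mpr hf2
        exact Option.some.inj (e1.symm.trans e2)

lemma card_dom_prod_le (hn : 0 < n) (l : List (Rook n)) :
    ∀ e ∈ l, (dom l.prod).card ≤ (dom e).card := by
  induction l with
  | nil => simp
  | cons x t ih =>
    intro e he
    rw [List.prod_cons]
    rcases List.mem_cons.mp he with he | he
    · subst he
      exact Finset.card_le_card (dom_mul_subset e t.prod)
    · calc (dom (x * t.prod)).card ≤ (dom t.prod).card := card_dom_mul_le hn x t.prod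
        _ ≤ (dom e).card := ih e he

lemma dom_toPEquiv (p : Equiv.Perm (Fin n)) : dom p.toPEquiv = Finset.univ := by
  apply Finset.eq_univ_iff_forall.mpr
  intro x
  simp [dom, Equiv.toPEquiv_apply]

lemma dom_egen_subset (hn : 0 < n) {j : ℕ} (hj : j ≤ n - 1) :
    dom (egen n j) ⊆ Finset.univ.erase ⟨n-1, by omega⟩ := by
  intro z hz
  simp only [dom, Finset.mem_filter, Finset.mem_univ, true_and] at hz
  have hzj : (z : ℕ) < j := by
    by_contra hcon
    rw [show egen n j z = if z ∈ {x : Fin n | (x : ℕ) < j} then some z else none from rfl] at hz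
    simp only [Set.mem_setOf_eq] at hz
    rw [if_neg hcon] at hz
    simp at hz
  refine Finset.mem_erase.mpr ⟨?_, Finset.mem_univ _⟩
  intro hcon
  rw [hcon] at hzj
  simp only at hzj
  omega

lemma sum_wt_le (L : List (Rook n)) : (L.map (wt n)).sum ≤ L.length := by
  induction L with
  | nil => simp
  | cons x t ih =>
    simp only [List.map_cons, List.sum_cons, List.length_cons]
    have : wt n x ≤ 1 := by unfold wt; split_ifs <;> omega
    omega

lemma sum_wt_eq (L : List (Rook n)) (h : ∀ x ∈ L, IsSGen n x) :
    (L.map (wt n)).sum = L.length := by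
  induction L with
  | nil => simp
  | cons x t ih =>
    simp only [List.map_cons, List.sum_cons, List.length_cons]
    have hx : wt n x = 1 := by unfold wt; rw [if_pos (h x (List.mem_cons_self))]
    rw [hx, ih (fun y hy => h y (List.mem_cons_of_mem _ hy))]
    omega

lemma isSGen_swap {u v : Fin n} (huv : (u:ℕ)+1 = v) :
    IsSGen n ((Equiv.swap u v).toPEquiv) := by
  have hv : (v:ℕ) < n := v.isLt
  refine ⟨(v:ℕ), by omega, by omega, ?_⟩
  have h1 : (⟨(v:ℕ)-1, by omega⟩ : Fin n) = u := Fin.ext (by simp; omega)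
  have h2 : (⟨(v:ℕ), by omega⟩ : Fin n) = v := Fin.ext rfl
  unfold sgen
  rw [h1, h2]

lemma lift_word (l : List (Rook n)) (h : ∀ x ∈ l, IsSGen n x) :
    ∃ l2 : List (Equiv.Perm (Fin n)),
      (∀ s ∈ l2, ∃ u v : Fin n, (u:ℕ)+1 = v ∧ s = Equiv.swap u v) ∧
      l2.map Equiv.toPEquiv = l := by
  induction l with
  | nil => exact ⟨[], by simp, rfl⟩
  | cons x t ih =>
    obtain ⟨l2, hl2, hmap⟩ := ih (fun y hy => h y (List.mem_cons_of_mem _ hy))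
    obtain ⟨i, h1, h2, hx⟩ := h x (List.mem_cons_self)
    refine ⟨Equiv.swap (⟨i-1, by omega⟩ : Fin n) ⟨i, by omega⟩ :: l2, ?_, ?_⟩
    · intro s hs
      rcases List.mem_cons.mp hs with hs | hs
      · exact ⟨⟨i-1, by omega⟩, ⟨i, by omega⟩, by simp; omega, hs⟩
      · exact hl2 s hs
    · rw [List.map_cons, hmap]
      congr 1
      rw [hx]
      rfl

end Aux2

/-- The length function on the rook monoid (minimal number of `s`-letters over
all word representatives in the generators `s_i`, `e_j`) restricts to the
Coxeter length (number of inversions) on the unit group `S_n`. -/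
theorem rookLength_restricts_to_coxeter_length (n : ℕ) (p : Equiv.Perm (Fin n)) :
    rookLength n p.toPEquiv = coxLength n p := by
  obtain ⟨l', hgen', hprod', hlen'⟩ := exists_word n p
  set L : List (Rook n) := (l'.reverse).map Equiv.toPEquiv with hL
  have hLgen : ∀ x ∈ L, IsSGen n x := by
    intro x hx
    rw [hL, List.mem_map] at hx
    obtain ⟨s, hs, rfl⟩ := hx
    obtain ⟨u, v, huv, rfl⟩ := hgen' s (List.mem_reverse.mp hs)
    exact isSGen_swap huv
  have hLprod : L.prod = p.toPEquiv := by
    rw [hL, map_toPEquiv_prod, List.reverse_reverse, hprod']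
  have hmem : (L.map (wt n)).sum ∈ {k | ∃ l : List (Rook n),
      (∀ x ∈ l, IsSGen n x ∨ IsEGen n x) ∧ l.prod = p.toPEquiv ∧ k = (l.map (wt n)).sum} :=
    ⟨L, fun x hx => Or.inl (hLgen x hx), hLprod, rfl⟩
  have hub : rookLength n p.toPEquiv ≤ coxLength n p := by
    calc rookLength n p.toPEquiv ≤ (L.map (wt n)).sum := Nat.sInf_le hmem
      _ ≤ L.length := sum_wt_le L
      _ = l'.length := by rw [hL, List.length_map, List.length_reverse]
      _ ≤ coxLength n p := hlen'
  have hlb : coxLength n p ≤ rookLength n p.toPEquiv := by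
    apply le_csInf ⟨_, hmem⟩
    rintro k ⟨l, hgens, hprod, rfl⟩
    rcases Nat.eq_zero_or_pos n with hn | hn
    · subst hn
      have hz : invSet 0 p = ∅ := Finset.eq_empty_of_forall_notMem (fun q _ => q.1.elim0)
      rw [coxLength_eq, hz, Finset.card_empty]
      exact Nat.zero_le _
    · have hall : ∀ x ∈ l, IsSGen n x := by
        intro x hx
        rcases hgens x hx with h | h
        · exact h
        · exfalso
          obtain ⟨j, hj, rfl⟩ := h
          have h1 := card_dom_prod_le hn l _ hx
          rw [hprod, dom_toPEquiv, Finset.card_univ, Fintype.card_fin] at h1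
          have h4 := Finset.card_le_card (dom_egen_subset hn hj)
          rw [Finset.card_erase_of_mem (Finset.mem_univ _), Finset.card_univ,
            Fintype.card_fin] at h4
          omega
      obtain ⟨l2, hl2gen, hl2map⟩ := lift_word l hall
      have hrev : l2.reverse.prod = p :=
        toPEquiv_inj (by rw [← map_toPEquiv_prod, hl2map, hprod])
      have hlen2 : l2.length = l.length := by rw [← hl2map, List.length_map]
      calc coxLength n p = coxLength n l2.reverse.prod := by rw [hrev]
        _ ≤ l2.reverse.length := word_ge n _ (fun s hs => hl2gen s (List.mem_reverse.mp hs))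
        _ = l.length := by rw [List.length_reverse, hlen2]
        _ = (l.map (wt n)).sum := (sum_wt_eq l hall).symm
  omega
end

section
/- Every element w of the rook monoid R_n admits a factorization w = w_1·e_j·w_2 where e_j is the partial identity on {1,…,j} for some 0 ≤ j ≤ n, and w_1, w_2 are permutations in S_n; moreover one can choose w_1 and w_2 so that the length function satisfies ℓ(w) = ℓ(w_1) + ℓ(w_2), where ℓ on S_n is the Coxeter length. -/
open scoped Classical

namespace RookAux

open Finset Equiv

variable {n : ℕ}

lemma rook_mul_apply (f g : Rook n) (x : Fin n) : (f * g) x = (f x).bind g := rfl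

lemma rook_one_def : (1 : Rook n) = PEquiv.refl (Fin n) := rfl

lemma egen_apply (j : ℕ) (x : Fin n) :
    egen n j x = if (x : ℕ) < j then some x else none := rfl

lemma egen_n_eq_one : egen n n = 1 :=
  PEquiv.ext fun x => by simp [egen_apply, x.isLt, rook_one_def]

lemma card_le_n (A : Finset (Fin n)) : A.card ≤ n := by
  simpa using A.card_le_univ

/-! ### Sorting permutation -/

noncomputable def rk (A : Finset (Fin n)) (x : Fin n) : ℕ :=
  (A.filter (fun z => z < x)).card

lemma rk_lt_card {A : Finset (Fin n)} {x : Fin n} (hx : x ∈ A) : rk A x < A.card :=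
  Finset.card_lt_card (Finset.filter_ssubset.2 ⟨x, hx, by simp⟩)

lemma rk_lt_rk {A : Finset (Fin n)} {x y : Fin n} (hx : x ∈ A) (hxy : x < y) :
    rk A x < rk A y := by
  apply Finset.card_lt_card
  rw [Finset.ssubset_iff_of_subset (Finset.monotone_filter_right A (fun z _ hz => lt_trans hz hxy))]
  exact ⟨x, by simp [hx, hxy], by simp⟩

noncomputable def sortFun (A : Finset (Fin n)) (x : Fin n) : Fin n :=
  if hx : x ∈ A then ⟨rk A x, lt_of_lt_of_le (rk_lt_card hx) (card_le_n A)⟩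
  else ⟨A.card + rk Aᶜ x, by
    have h1 : rk Aᶜ x < Aᶜ.card := rk_lt_card (by simpa using hx)
    have h2 : A.card + Aᶜ.card = n := by
      simpa using Finset.card_add_card_compl A
    omega⟩

lemma sortFun_mem_val {A : Finset (Fin n)} {x : Fin n} (hx : x ∈ A) :
    (sortFun A x : ℕ) = rk A x := by simp [sortFun, hx]

lemma sortFun_not_mem_val {A : Finset (Fin n)} {x : Fin n} (hx : x ∉ A) :
    (sortFun A x : ℕ) = A.card + rk Aᶜ x := by simp [sortFun, hx]

lemma sortFun_lt_iff (A : Finset (Fin n)) (x : Fin n) :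
    (sortFun A x : ℕ) < A.card ↔ x ∈ A := by
  by_cases hx : x ∈ A
  · simp [sortFun_mem_val hx, rk_lt_card hx, hx]
  · simp [sortFun_not_mem_val hx, hx]

lemma sortFun_lt_sortFun {A : Finset (Fin n)} {x y : Fin n} (hxy : x < y)
    (h : ¬ (x ∉ A ∧ y ∈ A)) : (sortFun A x : ℕ) < (sortFun A y : ℕ) := by
  by_cases hx : x ∈ A <;> by_cases hy : y ∈ A
  · rw [sortFun_mem_val hx, sortFun_mem_val hy]; exact rk_lt_rk hx hxy
  · rw [sortFun_mem_val hx, sortFun_not_mem_val hy]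
    have := rk_lt_card hx; omega
  · exact absurd ⟨hx, hy⟩ h
  · rw [sortFun_not_mem_val hx, sortFun_not_mem_val hy]
    have := rk_lt_rk (A := Aᶜ) (by simpa using hx) hxy; omega

lemma sortFun_injective (A : Finset (Fin n)) : Function.Injective (sortFun A) := by
  intro x y h
  rcases lt_trichotomy x y with hxy | hxy | hxy
  · by_cases hc : x ∉ A ∧ y ∈ A
    · have h1 : (sortFun A x : ℕ) = A.card + rk Aᶜ x := sortFun_not_mem_val hc.1
      have h2 : (sortFun A y : ℕ) = rk A y := sortFun_mem_val hc.2
      have := rk_lt_card hc.2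
      exact absurd (congrArg Fin.val h) (by omega)
    · exact absurd (congrArg Fin.val h) (Nat.ne_of_lt (sortFun_lt_sortFun hxy hc))
  · exact hxy
  · by_cases hc : y ∉ A ∧ x ∈ A
    · have h1 : (sortFun A y : ℕ) = A.card + rk Aᶜ y := sortFun_not_mem_val hc.1
      have h2 : (sortFun A x : ℕ) = rk A x := sortFun_mem_val hc.2
      have := rk_lt_card hc.2
      exact absurd (congrArg Fin.val h) (by omega)
    · exact absurd (congrArg Fin.val h) (Nat.ne_of_gt (sortFun_lt_sortFun hxy hc))

noncomputable def sortPerm (A : Finset (Fin n)) : Equiv.Perm (Fin n) :=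
  Equiv.ofBijective (sortFun A) (Finite.injective_iff_bijective.1 (sortFun_injective A))

lemma sortPerm_apply (A : Finset (Fin n)) (x : Fin n) : sortPerm A x = sortFun A x := rfl

lemma sortPerm_lt_iff (A : Finset (Fin n)) (x : Fin n) :
    (sortPerm A x : ℕ) < A.card ↔ x ∈ A := sortFun_lt_iff A x

lemma sortPerm_inv_pair {A : Finset (Fin n)} {x y : Fin n} (hxy : x < y)
    (h : sortPerm A y < sortPerm A x) : x ∉ A ∧ y ∈ A := by
  by_contra hc
  rw [Fin.lt_def, sortPerm_apply, sortPerm_apply] at h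
  exact absurd (sortFun_lt_sortFun hxy hc) (by omega)

lemma cox_def (p : Equiv.Perm (Fin n)) :
    coxLength n p =
      (Finset.univ.filter (fun q : Fin n × Fin n => q.1 < q.2 ∧ p q.2 < p q.1)).card := rfl

lemma cox_one : coxLength n 1 = 0 := by
  rw [cox_def]
  simp only [Finset.card_eq_zero, Finset.filter_eq_empty_iff]
  rintro q -
  rintro ⟨h1, h2⟩
  exact absurd h1 (not_lt.2 (le_of_lt h2))

lemma cox_mul_le (p q : Equiv.Perm (Fin n)) :
    coxLength n (p * q) ≤ coxLength n p + coxLength n q := by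
  classical
  set S := Finset.univ.filter
    (fun t : Fin n × Fin n => t.1 < t.2 ∧ (p * q) t.2 < (p * q) t.1) with hS
  set S1 := S.filter (fun t => q t.1 < q t.2) with hS1
  set S2 := S.filter (fun t => ¬ q t.1 < q t.2) with hS2
  have hsplit : S1 ∪ S2 = S := Finset.filter_union_filter_not_eq _ S
  have h1 : S1.card ≤ coxLength n p := by
    rw [cox_def]
    apply Finset.card_le_card_of_injOn (fun t => (q t.1, q t.2))
    · intro t ht
      simp only [hS1, hS, Finset.coe_filter, Finset.mem_coe, Finset.mem_filter, Finset.mem_univ, true_and, Set.mem_setOf_eq] at ht ⊢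
      exact ⟨ht.2, ht.1.2⟩
    · intro t₁ h₁ t₂ h₂ h
      simp only [Prod.mk.injEq] at h
      exact Prod.ext (q.injective h.1) (q.injective h.2)
  have h2 : S2.card ≤ coxLength n q := by
    rw [cox_def]
    apply Finset.card_le_card
    intro t ht
    simp only [hS2, hS, Finset.mem_filter, Finset.mem_univ, true_and] at ht ⊢
    refine ⟨ht.1.1, lt_of_le_of_ne (not_lt.1 ht.2) ?_⟩
    intro h
    exact absurd (q.injective h) (ne_of_gt ht.1.1)
  calc coxLength n (p * q) = S.card := rfl
    _ = (S1 ∪ S2).card := by rw [hsplit]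
    _ ≤ S1.card + S2.card := Finset.card_union_le _ _
    _ ≤ coxLength n p + coxLength n q := Nat.add_le_add h1 h2

lemma swap_not_lt {a b : Fin n} (hab : (b : ℕ) = (a : ℕ) + 1) {x y : Fin n}
    (hxy : x < y) (h : ¬ Equiv.swap a b x < Equiv.swap a b y) : x = a ∧ y = b := by
  have hne : Equiv.swap a b x ≠ Equiv.swap a b y := fun hc =>
    absurd ((Equiv.swap a b).injective hc) (ne_of_lt hxy)
  have h' : Equiv.swap a b y < Equiv.swap a b x := lt_of_le_of_ne (not_lt.1 h) (Ne.symm hne)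
  have key : ∀ z : Fin n, ((Equiv.swap a b z : Fin n) : ℕ)
      = if z = a then (b : ℕ) else if z = b then (a : ℕ) else (z : ℕ) := by
    intro z; rw [Equiv.swap_apply_def]; split_ifs <;> rfl
  have hx := key x
  have hy := key y
  rw [Fin.lt_def] at hxy h'
  have main : (x : ℕ) = (a : ℕ) ∧ (y : ℕ) = (b : ℕ) := by
    by_cases hxa : x = a
    · have hxa' := congrArg Fin.val hxa
      rw [if_pos hxa] at hx
      by_cases hyb : y = b
      · exact ⟨hxa', congrArg Fin.val hyb⟩
      · have hya : y ≠ a := fun hc => absurd (congrArg Fin.val hc) (by omega)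
        rw [if_neg hya, if_neg hyb] at hy
        omega
    · have hxa' : (x : ℕ) ≠ (a : ℕ) := fun hc => hxa (Fin.ext hc)
      rw [if_neg hxa] at hx
      by_cases hxb : x = b
      · have hxb' := congrArg Fin.val hxb
        rw [if_pos hxb] at hx
        have hya : y ≠ a := fun hc => absurd (congrArg Fin.val hc) (by omega)
        have hyb : y ≠ b := fun hc => absurd (congrArg Fin.val hc) (by omega)
        rw [if_neg hya, if_neg hyb] at hy
        omega
      · have hxb' : (x : ℕ) ≠ (b : ℕ) := fun hc => hxb (Fin.ext hc)
        rw [if_neg hxb] at hx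
        by_cases hya : y = a
        · have hya' := congrArg Fin.val hya
          rw [if_pos hya] at hy
          omega
        · by_cases hyb : y = b
          · have hyb' := congrArg Fin.val hyb
            rw [if_neg hya, if_pos hyb] at hy
            omega
          · have hyb' : (y : ℕ) ≠ (b : ℕ) := fun hc => hyb (Fin.ext hc)
            rw [if_neg hya, if_neg hyb] at hy
            omega
  exact ⟨Fin.ext main.1, Fin.ext main.2⟩

lemma cox_swap_le {a b : Fin n} (hab : (b : ℕ) = (a : ℕ) + 1) :
    coxLength n (Equiv.swap a b) ≤ 1 := by
  rw [cox_def]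
  calc (Finset.univ.filter
      (fun t : Fin n × Fin n => t.1 < t.2 ∧ Equiv.swap a b t.2 < Equiv.swap a b t.1)).card
      ≤ ({(a, b)} : Finset (Fin n × Fin n)).card := by
        apply Finset.card_le_card
        intro t ht
        simp only [Finset.mem_filter, Finset.mem_univ, true_and] at ht
        obtain ⟨h1, h2⟩ := swap_not_lt hab ht.1 (not_lt.2 (le_of_lt ht.2))
        simp [Prod.ext_iff, h1, h2]
    _ = 1 := Finset.card_singleton _

lemma cox_descent {p : Equiv.Perm (Fin n)} {a b : Fin n} (hab : (b : ℕ) = (a : ℕ) + 1)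
    (hd : p b < p a) : coxLength n (p * Equiv.swap a b) + 1 = coxLength n p := by
  classical
  set s := Equiv.swap a b with hs
  have hab' : a < b := by rw [Fin.lt_def]; omega
  have hsa : s a = b := Equiv.swap_apply_left a b
  have hsb : s b = a := Equiv.swap_apply_right a b
  set S := Finset.univ.filter
    (fun t : Fin n × Fin n => t.1 < t.2 ∧ (p * s) t.2 < (p * s) t.1) with hS
  set T := (Finset.univ.filter
    (fun t : Fin n × Fin n => t.1 < t.2 ∧ p t.2 < p t.1)).erase (a, b) with hT
  have hcard : S.card = T.card := by
    apply Finset.card_bij (fun t _ => (s t.1, s t.2))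
    · intro t ht
      simp only [hS, Finset.mem_filter, Finset.mem_univ, true_and] at ht
      obtain ⟨ht1, ht2⟩ := ht
      have hst : s t.1 < s t.2 := by
        by_contra hc
        obtain ⟨h1, h2⟩ := swap_not_lt hab ht1 hc
        rw [h1, h2] at ht2
        simp only [Equiv.Perm.mul_apply] at ht2
        rw [hsa, hsb] at ht2
        exact absurd hd (not_lt.2 (le_of_lt ht2))
      simp only [hT, Finset.mem_erase, Finset.mem_filter, Finset.mem_univ, true_and]
      refine ⟨?_, hst, ?_⟩
      · intro hc
        rw [Prod.ext_iff] at hc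
        have h1 : t.1 = b := by
          have := congrArg s hc.1
          rwa [hs, Equiv.swap_apply_self, ← hs, hsa] at this
        have h2 : t.2 = a := by
          have := congrArg s hc.2
          rwa [hs, Equiv.swap_apply_self, ← hs, hsb] at this
        rw [h1, h2] at ht1
        exact absurd ht1 (not_lt.2 (le_of_lt hab'))
      · simpa only [Equiv.Perm.mul_apply] using ht2
    · intro t₁ h₁ t₂ h₂ h
      simp only [Prod.mk.injEq] at h
      exact Prod.ext (s.injective h.1) (s.injective h.2)
    · intro t ht
      simp only [hT, Finset.mem_erase, Finset.mem_filter, Finset.mem_univ, true_and] at ht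
      obtain ⟨hne, ht1, ht2⟩ := ht
      refine ⟨(s t.1, s t.2), ?_, ?_⟩
      · simp only [hS, Finset.mem_filter, Finset.mem_univ, true_and]
        constructor
        · by_contra hc
          obtain ⟨h1, h2⟩ := swap_not_lt hab ht1 hc
          exact hne (Prod.ext h1 h2)
        · simp only [Equiv.Perm.mul_apply, hs, Equiv.swap_apply_self]
          exact ht2
      · simp only [hs, Equiv.swap_apply_self]
  have hmem : (a, b) ∈ Finset.univ.filter
      (fun t : Fin n × Fin n => t.1 < t.2 ∧ p t.2 < p t.1) := by
    simp only [Finset.mem_filter, Finset.mem_univ, true_and]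
    exact ⟨hab', hd⟩
  have := Finset.card_erase_add_one hmem
  rw [cox_def, cox_def]
  change S.card + 1 = _
  rw [hcard]
  rw [hT]
  exact this

lemma strictMono_eq_one {p : Equiv.Perm (Fin n)} (h : StrictMono (⇑p)) : p = 1 := by
  have h2 : StrictMono (id : Fin n → Fin n) := strictMono_id
  have hr : Set.range ⇑p = Set.range (id : Fin n → Fin n) := by
    rw [Set.range_id]; exact Set.range_eq_univ.2 p.surjective
  have hwf : WellFoundedLT (Fin n) := inferInstance
  have := (@StrictMono.range_inj (Fin n) (Fin n) _ _ hwf _ _ h h2).1 hr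
  exact Equiv.ext fun x => congrFun this x

lemma descent_exists {p : Equiv.Perm (Fin n)} (hp : p ≠ 1) :
    ∃ a b : Fin n, (b : ℕ) = (a : ℕ) + 1 ∧ p b < p a := by
  by_contra hc
  push_neg at hc
  apply hp
  apply strictMono_eq_one
  cases n with
  | zero => intro x; exact absurd x.isLt (by omega)
  | succ m =>
    rw [Fin.strictMono_iff_lt_succ]
    intro i
    have hab : ((i.succ : Fin (m+1)) : ℕ) = ((i.castSucc : Fin (m+1)) : ℕ) + 1 := by simp
    have := hc i.castSucc i.succ hab
    refine lt_of_le_of_ne (not_lt.1 ?_) ?_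
    · exact fun hlt => absurd hlt (by simpa using this)
    · intro he
      have : (i.castSucc : Fin (m+1)) = i.succ := p.injective he
      have := congrArg Fin.val this
      simp at this
lemma toPEquiv_mul (p q : Equiv.Perm (Fin n)) :
    (p.toPEquiv * q.toPEquiv : Rook n) = (q * p).toPEquiv := by
  rw [Equiv.Perm.mul_def, Equiv.toPEquiv_trans]
  rfl

lemma one_toPEquiv : ((1 : Equiv.Perm (Fin n)).toPEquiv : Rook n) = 1 := rfl

lemma sgen_eq {i : ℕ} (h1 : 1 ≤ i) (h2 : i ≤ n - 1) {x y : Fin n}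
    (hx : (x : ℕ) = i - 1) (hy : (y : ℕ) = i) :
    sgen n i h1 h2 = (Equiv.swap x y).toPEquiv := by
  unfold sgen
  rw [show (⟨i - 1, by omega⟩ : Fin n) = x from Fin.ext (by simp only [Fin.val_mk]; omega),
    show (⟨i, by omega⟩ : Fin n) = y from Fin.ext (by simp only [Fin.val_mk]; omega)]

lemma reduced_word (p : Equiv.Perm (Fin n)) :
    ∃ l : List (Rook n), (∀ x ∈ l, IsSGen n x) ∧ l.prod = p.toPEquiv ∧
      l.length = coxLength n p := by
  suffices H : ∀ k (p : Equiv.Perm (Fin n)), coxLength n p = k →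
      ∃ l : List (Rook n), (∀ x ∈ l, IsSGen n x) ∧ l.prod = p.toPEquiv ∧
        l.length = coxLength n p from H _ p rfl
  intro k
  induction k using Nat.strong_induction_on with
  | _ k IH =>
    intro p hk
    by_cases hp : p = 1
    · subst hp
      exact ⟨[], by simp, rfl, by simp [cox_one]⟩
    · obtain ⟨a, b, hab, hd⟩ := descent_exists hp
      have hdec := cox_descent hab hd
      set p' := p * Equiv.swap a b with hp'
      have hlt : coxLength n p' < k := by omega
      obtain ⟨l', hmem', hprod', hlen'⟩ := IH (coxLength n p') hlt p' rfl
      have hb : (b : ℕ) < n := b.isLt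
      have h1 : 1 ≤ (a : ℕ) + 1 := by omega
      have h2 : (a : ℕ) + 1 ≤ n - 1 := by omega
      refine ⟨sgen n ((a : ℕ) + 1) h1 h2 :: l', ?_, ?_, ?_⟩
      · intro x hx
        rcases List.mem_cons.1 hx with hx | hx
        · exact ⟨(a : ℕ) + 1, h1, h2, hx⟩
        · exact hmem' x hx
      · rw [List.prod_cons, hprod', sgen_eq h1 h2 (x := a) (y := b) (by omega) (by omega),
          toPEquiv_mul]
        congr 1
        rw [hp', mul_assoc, Equiv.swap_mul_self, mul_one]
      · simp only [List.length_cons, hlen']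
        omega

/-! ### The exchange lemma -/

lemma triple_apply (p : Equiv.Perm (Fin n)) (k : ℕ) (q : Equiv.Perm (Fin n)) (x : Fin n) :
    (p.toPEquiv * egen n k * q.toPEquiv : Rook n) x
      = if ((p x : Fin n) : ℕ) < k then some (q (p x)) else none := by
  show (((p.toPEquiv x).bind (egen n k)).bind q.toPEquiv) = _
  rw [Equiv.toPEquiv_apply, Option.bind_some, egen_apply]
  by_cases h : ((p x : Fin n) : ℕ) < k
  · rw [if_pos h, if_pos h, Option.bind_some, Equiv.toPEquiv_apply]
  · rw [if_neg h, if_neg h, Option.bind_none]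

lemma lhs_apply (m : ℕ) (σ : Equiv.Perm (Fin n)) (j : ℕ) (x : Fin n) :
    (egen n m * σ.toPEquiv * egen n j : Rook n) x
      = if (x : ℕ) < m ∧ ((σ x : Fin n) : ℕ) < j then some (σ x) else none := by
  show (((egen n m x).bind σ.toPEquiv).bind (egen n j)) = _
  rw [egen_apply]
  by_cases h1 : (x : ℕ) < m
  · rw [if_pos h1, Option.bind_some, Equiv.toPEquiv_apply, Option.bind_some, egen_apply]
    by_cases h2 : ((σ x : Fin n) : ℕ) < j
    · rw [if_pos h2, if_pos ⟨h1, h2⟩]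
    · rw [if_neg h2, if_neg (by tauto)]
  · rw [if_neg h1, Option.bind_none, Option.bind_none, if_neg (by tauto)]

lemma exchange (σ : Equiv.Perm (Fin n)) (m j : ℕ) :
    ∃ k ≤ n, ∃ u v : Equiv.Perm (Fin n),
      egen n m * σ.toPEquiv * egen n j = u.toPEquiv * egen n k * v.toPEquiv ∧
      coxLength n u + coxLength n v ≤ coxLength n σ := by
  classical
  set A : Finset (Fin n) :=
    Finset.univ.filter (fun x => (x : ℕ) < m ∧ ((σ x : Fin n) : ℕ) < j) with hA
  have hAmem : ∀ x : Fin n, x ∈ A ↔ ((x : ℕ) < m ∧ ((σ x : Fin n) : ℕ) < j) := by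
    intro x; simp [hA]
  set u := sortPerm A with hu
  set v := u.symm.trans σ with hv
  refine ⟨A.card, card_le_n A, u, v, ?_, ?_⟩
  · apply PEquiv.ext
    intro x
    rw [lhs_apply, triple_apply]
    by_cases hx : x ∈ A
    · rw [if_pos ((hAmem x).1 hx), if_pos ((sortPerm_lt_iff A x).2 hx)]
      have : v (u x) = σ x := by
        rw [hv]
        simp
      rw [this]
    · rw [if_neg (fun hc => hx ((hAmem x).2 hc)),
        if_neg (fun hc => hx ((sortPerm_lt_iff A x).1 hc))]
  · set Iu := Finset.univ.filter
      (fun t : Fin n × Fin n => t.1 < t.2 ∧ u t.2 < u t.1) with hIu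
    set Iv := Finset.univ.filter
      (fun t : Fin n × Fin n => t.1 < t.2 ∧ v t.2 < v t.1) with hIv
    set Is := Finset.univ.filter
      (fun t : Fin n × Fin n => t.1 < t.2 ∧ σ t.2 < σ t.1) with hIs
    set Ivim := Iv.image (fun t : Fin n × Fin n => ((u.symm t.1 : Fin n), (u.symm t.2 : Fin n)))
      with hIvim
    have himv : ∀ t ∈ Iv, u.symm t.1 < u.symm t.2 ∧ σ (u.symm t.2) < σ (u.symm t.1) := by
      intro t ht
      rw [hIv, Finset.mem_filter] at ht
      obtain ⟨-, ht1, ht2⟩ := ht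
      have hσ : σ (u.symm t.2) < σ (u.symm t.1) := by
        rw [hv] at ht2
        simpa using ht2
      refine ⟨?_, hσ⟩
      rcases lt_trichotomy (u.symm t.1) (u.symm t.2) with h | h | h
      · exact h
      · exact absurd (u.symm.injective h) (ne_of_lt ht1)
      · exfalso
        have hpair := sortPerm_inv_pair h (by
          rw [Equiv.apply_symm_apply, Equiv.apply_symm_apply]
          exact ht1)
        have hx2A : u.symm t.1 ∈ A := hpair.2
        have hx1A : u.symm t.2 ∉ A := hpair.1
        obtain ⟨h2m, h2j⟩ := (hAmem _).1 hx2A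
        have hlt := Fin.lt_def.1 h
        have h1m : ((u.symm t.2 : Fin n) : ℕ) < m := by omega
        have h1j : ¬ ((σ (u.symm t.2) : Fin n) : ℕ) < j :=
          fun hc => hx1A ((hAmem _).2 ⟨h1m, hc⟩)
        have hσ' := Fin.lt_def.1 hσ
        omega
    have hsub : Iu ∪ Ivim ⊆ Is := by
      intro t ht
      rcases Finset.mem_union.1 ht with ht | ht
      · rw [hIu, Finset.mem_filter] at ht
        obtain ⟨-, ht1, ht2⟩ := ht
        obtain ⟨h1A, h2A⟩ := sortPerm_inv_pair ht1 ht2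
        rw [hIs, Finset.mem_filter]
        refine ⟨Finset.mem_univ _, ht1, ?_⟩
        have h2m := ((hAmem _).1 h2A).1
        have h2j := ((hAmem _).1 h2A).2
        have h1m : (t.1 : ℕ) < m := by
          have := Fin.lt_def.1 ht1
          omega
        have h1j : ¬ ((σ t.1 : Fin n) : ℕ) < j := fun hc => h1A ((hAmem _).2 ⟨h1m, hc⟩)
        rw [Fin.lt_def]
        omega
      · rw [hIvim] at ht
        obtain ⟨t', ht', rfl⟩ := Finset.mem_image.1 ht
        have := himv t' ht'
        rw [hIs, Finset.mem_filter]
        exact ⟨Finset.mem_univ _, this.1, this.2⟩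
    have hdisj : Disjoint Iu Ivim := by
      rw [Finset.disjoint_left]
      intro t htu htv
      rw [hIvim] at htv
      obtain ⟨t', ht', heq⟩ := Finset.mem_image.1 htv
      rw [hIu, Finset.mem_filter] at htu
      obtain ⟨-, ht1, ht2⟩ := htu
      rw [hIv, Finset.mem_filter] at ht'
      have h1 : u t.1 = t'.1 := by rw [← heq]; simp [Equiv.apply_symm_apply]
      have h2 : u t.2 = t'.2 := by rw [← heq]; simp [Equiv.apply_symm_apply]
      rw [h1, h2] at ht2
      exact absurd ht'.2.1 (not_lt.2 (le_of_lt ht2))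
    have hinj : Set.InjOn (fun t : Fin n × Fin n => ((u.symm t.1 : Fin n), (u.symm t.2 : Fin n)))
        (Iv : Set (Fin n × Fin n)) := by
      intro t₁ _ t₂ _ h
      simp only [Prod.mk.injEq] at h
      exact Prod.ext (u.symm.injective h.1) (u.symm.injective h.2)
    have hcard : coxLength n u + coxLength n v = (Iu ∪ Ivim).card := by
      rw [Finset.card_union_of_disjoint hdisj, hIvim, Finset.card_image_of_injOn hinj,
        cox_def, cox_def, hIu, hIv]
    rw [hcard]
    exact Finset.card_le_card hsub
/-! ### Existence of a factorization -/

noncomputable def domF (w : Rook n) : Finset (Fin n) :=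
  Finset.univ.filter (fun x => (w x).isSome)

noncomputable def ranF (w : Rook n) : Finset (Fin n) :=
  Finset.univ.filter (fun y => (w.symm y).isSome)

lemma mem_domF {w : Rook n} {x : Fin n} : x ∈ domF w ↔ (w x).isSome := by simp [domF]

lemma mem_ranF {w : Rook n} {y : Fin n} : y ∈ ranF w ↔ (w.symm y).isSome := by simp [ranF]

lemma card_dom_eq_card_ran (w : Rook n) : (domF w).card = (ranF w).card := by
  classical
  apply Finset.card_bij (fun x hx => (w x).get (mem_domF.1 hx))
  · intro x hx
    rw [mem_ranF]
    have he : w x = some ((w x).get (mem_domF.1 hx)) := (Option.some_get _).symm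
    rw [(PEquiv.eq_some_iff w).2 he]
    rfl
  · intro x₁ h₁ x₂ h₂ h
    have e1 : w x₁ = some ((w x₁).get (mem_domF.1 h₁)) := (Option.some_get _).symm
    have e2 : w x₂ = some ((w x₂).get (mem_domF.1 h₂)) := (Option.some_get _).symm
    rw [h] at e1
    have s1 := (PEquiv.eq_some_iff w).2 e1
    have s2 := (PEquiv.eq_some_iff w).2 e2
    rw [s1] at s2
    exact Option.some.inj s2
  · intro y hy
    have hs := mem_ranF.1 hy
    have he : w.symm y = some ((w.symm y).get hs) := (Option.some_get _).symm
    have hw : w ((w.symm y).get hs) = some y := (PEquiv.eq_some_iff w).1 he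
    refine ⟨(w.symm y).get hs, mem_domF.2 (by rw [hw]; rfl), ?_⟩
    simp [hw]

lemma exists_factorization (w : Rook n) :
    ∃ j ≤ n, ∃ w₁ w₂ : Equiv.Perm (Fin n),
      w = w₁.toPEquiv * egen n j * w₂.toPEquiv := by
  classical
  have hcard : (ranF w).card = (domF w).card := (card_dom_eq_card_ran w).symm
  have hkey : ∀ i : Fin n, (i : ℕ) < (domF w).card ↔ (sortPerm (domF w)).symm i ∈ domF w := by
    intro i
    have h := sortPerm_lt_iff (domF w) ((sortPerm (domF w)).symm i)
    rw [Equiv.apply_symm_apply] at h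
    exact h
  have hsome : ∀ i : Fin n, (i : ℕ) < (domF w).card →
      ∃ y : Fin n, w ((sortPerm (domF w)).symm i) = some y ∧ y ∈ ranF w := by
    intro i hi
    obtain ⟨y, hy⟩ := Option.isSome_iff_exists.1 (mem_domF.1 ((hkey i).1 hi))
    refine ⟨y, hy, mem_ranF.2 ?_⟩
    rw [(PEquiv.eq_some_iff w).2 hy]
    rfl
  choose Y hY1 hY2 using hsome
  set qFun : Fin n → Fin n := fun i =>
    if h : (i : ℕ) < (domF w).card then sortPerm (ranF w) (Y i h) else i with hqFun
  have hqlt : ∀ (i : Fin n), (i : ℕ) < (domF w).card → ((qFun i : Fin n) : ℕ) < (domF w).card := by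
    intro i h
    simp only [hqFun, dif_pos h]
    rw [← hcard]
    exact (sortPerm_lt_iff (ranF w) (Y i h)).2 (hY2 i h)
  have hqinj : Function.Injective qFun := by
    intro i₁ i₂ h
    by_cases h1 : (i₁ : ℕ) < (domF w).card <;> by_cases h2 : (i₂ : ℕ) < (domF w).card
    · have e : sortPerm (ranF w) (Y i₁ h1) = sortPerm (ranF w) (Y i₂ h2) := by
        simp only [hqFun, dif_pos h1, dif_pos h2] at h
        exact h
      have eY : Y i₁ h1 = Y i₂ h2 := (sortPerm (ranF w)).injective e
      have e1 := hY1 i₁ h1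
      have e2 := hY1 i₂ h2
      rw [eY] at e1
      have s1 := (PEquiv.eq_some_iff w).2 e1
      have s2 := (PEquiv.eq_some_iff w).2 e2
      rw [s1] at s2
      exact (sortPerm (domF w)).symm.injective (Option.some.inj s2)
    · exfalso
      have := hqlt i₁ h1
      rw [h] at this
      simp only [hqFun, dif_neg h2] at this
      exact h2 this
    · exfalso
      have := hqlt i₂ h2
      rw [← h] at this
      simp only [hqFun, dif_neg h1] at this
      exact h1 this
    · simp only [hqFun, dif_neg h1, dif_neg h2] at h
      exact h
  set qPerm : Equiv.Perm (Fin n) :=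
    Equiv.ofBijective qFun (Finite.injective_iff_bijective.1 hqinj) with hqPerm
  refine ⟨(domF w).card, card_le_n _, sortPerm (domF w),
    qPerm.trans (sortPerm (ranF w)).symm, ?_⟩
  apply PEquiv.ext
  intro x
  rw [triple_apply]
  by_cases hx : x ∈ domF w
  · have hlt : ((sortPerm (domF w) x : Fin n) : ℕ) < (domF w).card :=
      (sortPerm_lt_iff (domF w) x).2 hx
    rw [if_pos hlt]
    have e1 := hY1 (sortPerm (domF w) x) hlt
    rw [Equiv.symm_apply_apply] at e1
    have e2 : (qPerm.trans (sortPerm (ranF w)).symm) (sortPerm (domF w) x)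
        = Y (sortPerm (domF w) x) hlt := by
      simp only [hqPerm, Equiv.trans_apply, Equiv.ofBijective_apply, hqFun, dif_pos hlt,
        Equiv.symm_apply_apply]
    rw [e2]
    exact e1
  · have hlt : ¬ ((sortPerm (domF w) x : Fin n) : ℕ) < (domF w).card :=
      fun hc => hx ((sortPerm_lt_iff (domF w) x).1 hc)
    rw [if_neg hlt]
    exact Option.not_isSome_iff_eq_none.1 (fun hc => hx (mem_domF.2 hc))
/-! ### Words and weights -/

lemma wt_eq_one_of_isSGen {x : Rook n} (h : IsSGen n x) : wt n x = 1 := if_pos h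

lemma wt_egen {j : ℕ} (hj : j < n) : wt n (egen n j) = 0 := by
  unfold wt
  rw [if_neg]
  rintro ⟨i, h1, h2, he⟩
  have hx : (⟨n - 1, by omega⟩ : Fin n) = ⟨n - 1, by omega⟩ := rfl
  have := DFunLike.congr_fun he (⟨n - 1, by omega⟩ : Fin n)
  rw [egen_apply] at this
  rw [if_neg (by simp only [Fin.val_mk]; omega)] at this
  unfold sgen at this
  rw [Equiv.toPEquiv_apply] at this
  exact Option.some_ne_none _ this.symm

lemma sum_wt_of_sgen (l : List (Rook n)) (h : ∀ x ∈ l, IsSGen n x) :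
    (l.map (wt n)).sum = l.length := by
  induction l with
  | nil => simp
  | cons a tl ih =>
    rw [List.map_cons, List.sum_cons, List.length_cons,
      wt_eq_one_of_isSGen (h a (List.mem_cons_self)),
      ih (fun x hx => h x (List.mem_cons_of_mem a hx))]
    omega

lemma word_of_factorization (j : ℕ) (hj : j ≤ n) (w₁ w₂ : Equiv.Perm (Fin n)) :
    ∃ l : List (Rook n), (∀ x ∈ l, IsSGen n x ∨ IsEGen n x) ∧
      l.prod = w₁.toPEquiv * egen n j * w₂.toPEquiv ∧
      (l.map (wt n)).sum = coxLength n w₁ + coxLength n w₂ := by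
  obtain ⟨l₁, hm1, hp1, hl1⟩ := reduced_word w₁
  obtain ⟨l₂, hm2, hp2, hl2⟩ := reduced_word w₂
  by_cases hjn : j = n
  · refine ⟨l₁ ++ l₂, ?_, ?_, ?_⟩
    · intro x hx
      rcases List.mem_append.1 hx with hx | hx
      · exact Or.inl (hm1 x hx)
      · exact Or.inl (hm2 x hx)
    · rw [List.prod_append, hp1, hp2, hjn, egen_n_eq_one, mul_one]
    · rw [List.map_append, List.sum_append, sum_wt_of_sgen l₁ hm1, sum_wt_of_sgen l₂ hm2,
        hl1, hl2]
  · have hjlt : j < n := lt_of_le_of_ne hj hjn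
    refine ⟨l₁ ++ egen n j :: l₂, ?_, ?_, ?_⟩
    · intro x hx
      rcases List.mem_append.1 hx with hx | hx
      · exact Or.inl (hm1 x hx)
      · rcases List.mem_cons.1 hx with hx | hx
        · exact Or.inr ⟨j, by omega, hx⟩
        · exact Or.inl (hm2 x hx)
    · rw [List.prod_append, List.prod_cons, hp1, hp2, mul_assoc]
    · rw [List.map_append, List.map_cons, List.sum_append, List.sum_cons, wt_egen hjlt,
        sum_wt_of_sgen l₁ hm1, sum_wt_of_sgen l₂ hm2, hl1, hl2]
      omega

/-! ### Factorization from a word -/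

lemma factor_of_word (l : List (Rook n)) (hmem : ∀ x ∈ l, IsSGen n x ∨ IsEGen n x) :
    ∃ j ≤ n, ∃ w₁ w₂ : Equiv.Perm (Fin n),
      l.prod = w₁.toPEquiv * egen n j * w₂.toPEquiv ∧
      coxLength n w₁ + coxLength n w₂ ≤ (l.map (wt n)).sum := by
  induction l with
  | nil =>
    refine ⟨n, le_refl n, 1, 1, ?_, ?_⟩
    · rw [List.prod_nil, egen_n_eq_one, one_toPEquiv, one_mul, mul_one]
    · simp [cox_one]
  | cons g tl ih =>
    obtain ⟨j, hj, w₁, w₂, hprod, hcox⟩ := ih (fun x hx => hmem x (List.mem_cons_of_mem g hx))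
    rcases hmem g (List.mem_cons_self) with hs | he
    · obtain ⟨i, h1, h2, hg⟩ := hs
      have hbn : i < n := by omega
      obtain ⟨a, ha⟩ : ∃ a : Fin n, (a : ℕ) = i - 1 := ⟨⟨i - 1, by omega⟩, rfl⟩
      obtain ⟨b, hb⟩ : ∃ b : Fin n, (b : ℕ) = i := ⟨⟨i, by omega⟩, rfl⟩
      have hab : (b : ℕ) = (a : ℕ) + 1 := by omega
      have hg' : g = (Equiv.swap a b).toPEquiv := by rw [hg]; exact sgen_eq h1 h2 ha hb
      refine ⟨j, hj, w₁ * Equiv.swap a b, w₂, ?_, ?_⟩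
      · rw [List.prod_cons, hprod, hg']
        simp only [← mul_assoc]
        rw [toPEquiv_mul]
      · have hb1 := cox_mul_le w₁ (Equiv.swap a b)
        have hb2 := cox_swap_le (n := n) hab
        have hwt : wt n g = 1 := wt_eq_one_of_isSGen ⟨i, h1, h2, hg⟩
        rw [List.map_cons, List.sum_cons, hwt]
        omega
    · obtain ⟨m, hm, hg⟩ := he
      obtain ⟨k, hk, u, v, hex, hcox2⟩ := exchange w₁ m j
      refine ⟨k, hk, u, w₂ * v, ?_, ?_⟩
      · rw [List.prod_cons, hprod, hg, ← toPEquiv_mul v w₂]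
        simp only [← mul_assoc]
        rw [hex]
      · have hb1 := cox_mul_le w₂ v
        rw [List.map_cons, List.sum_cons]
        omega
end RookAux

/-- Every element of the rook monoid factors as `w₁ · e_j · w₂` with `w₁, w₂`
permutations and `e_j` a partial identity on an initial segment, in such a way
that `ℓ(w) = ℓ(w₁) + ℓ(w₂)` where `ℓ` on permutations is the Coxeter length. -/
theorem rook_normal_form_length (n : ℕ) (w : Rook n) :
    ∃ j ≤ n, ∃ w₁ w₂ : Equiv.Perm (Fin n),
      w = w₁.toPEquiv * egen n j * w₂.toPEquiv ∧
      rookLength n w = coxLength n w₁ + coxLength n w₂ := by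
  classical
  obtain ⟨j₀, hj₀, a₁, a₂, hfac⟩ := RookAux.exists_factorization w
  obtain ⟨l₀, hl₀m, hl₀p, hl₀s⟩ := RookAux.word_of_factorization j₀ hj₀ a₁ a₂
  set S : Set ℕ := {k | ∃ l : List (Rook n), (∀ x ∈ l, IsSGen n x ∨ IsEGen n x) ∧
    l.prod = w ∧ k = (l.map (wt n)).sum} with hS
  have hrl : rookLength n w = sInf S := rfl
  have hne : S.Nonempty := ⟨(l₀.map (wt n)).sum, l₀, hl₀m, hl₀p.trans hfac.symm, rfl⟩
  have hmem := Nat.sInf_mem hne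
  obtain ⟨l, hlm, hlp, hls⟩ := hmem
  obtain ⟨j, hj, w₁, w₂, heq, hle⟩ := RookAux.factor_of_word l hlm
  have hw : w = w₁.toPEquiv * egen n j * w₂.toPEquiv := by rw [← hlp, heq]
  obtain ⟨l', h1', h2', h3'⟩ := RookAux.word_of_factorization j hj w₁ w₂
  have hle2 : sInf S ≤ coxLength n w₁ + coxLength n w₂ :=
    Nat.sInf_le ⟨l', h1', h2'.trans hw.symm, h3'.symm⟩
  exact ⟨j, hj, w₁, w₂, hw, by omega⟩
end
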